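/- arXiv:1111.1078 — 4 statements merged into one kernel-verified Lean document; each statement's English description precedes it below -/
import Mathlib

section
/- Let X be a supercritical offspring distribution with X(0) > 0 and extinction probability q, and let f_K be the K-th iterate of the generating function f of X. Then there exists c > 0 such that for all K ≥ 1, |q - f_K(0)| ≤ exp(-cK). -/
open MeasureTheory Filter
open scoped ENNReal

theorem pow_sub_pow_aux' {x q : ℝ} (hx : 0 ≤ x) (hxq : x ≤ q) (i : ℕ) :
    q ^ i - x ^ i ≤ (q - x) * (i * q ^ (i - 1)) := by
  induction i with
  | zero => simp
  | succ n ih =>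
    rcases Nat.eq_zero_or_pos n with h | h
    · subst h; simp
    · have hq : 0 ≤ q := hx.trans hxq
      have h1 : q * (q ^ n - x ^ n) ≤ q * ((q - x) * (n * q ^ (n - 1))) :=
        mul_le_mul_of_nonneg_left ih hq
      have h2 : q ^ (n - 1) * q = q ^ n := by
        rw [← pow_succ]; congr 1; omega
      have h3 : x ^ n * (q - x) ≤ q ^ n * (q - x) :=
        mul_le_mul_of_nonneg_right (pow_le_pow_left₀ hx hxq n) (by linarith)
      have h5 : q * ((q - x) * (n * q ^ (n - 1))) = (q - x) * (n * q ^ n) := by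
        rw [← h2]; ring
      have key : q ^ (n + 1) - x ^ (n + 1) = q * (q ^ n - x ^ n) + x ^ n * (q - x) := by
        ring
      simp only [Nat.add_sub_cancel]
      push_cast
      nlinarith

theorem geom_le_aux' {q : ℝ} (hq0 : 0 < q) (hq1 : q < 1) (i : ℕ) :
    (i : ℝ) * q ^ (i - 1) * (1 - q) ≤ 1 - q ^ i := by
  have hgs := geom_sum_mul q i
  have hle : (i : ℝ) * q ^ (i - 1) ≤ ∑ j ∈ Finset.range i, q ^ j := by
    have h := Finset.sum_le_sum (s := Finset.range i)
      (f := fun _ => q ^ (i - 1)) (g := fun j => q ^ j)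
      (fun j hj => pow_le_pow_of_le_one hq0.le hq1.le
        (by simp [Finset.mem_range] at hj; omega))
    simpa [Finset.sum_const, Finset.card_range, nsmul_eq_mul] using h
  nlinarith

theorem geom_lt_aux' {q : ℝ} (hq0 : 0 < q) (hq1 : q < 1) {i : ℕ} (hi : 2 ≤ i) :
    (i : ℝ) * q ^ (i - 1) * (1 - q) < 1 - q ^ i := by
  have hgs := geom_sum_mul q i
  have hlt : (i : ℝ) * q ^ (i - 1) < ∑ j ∈ Finset.range i, q ^ j := by
    have h := Finset.sum_lt_sum (s := Finset.range i)
      (f := fun _ => q ^ (i - 1)) (g := fun j => q ^ j)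
      (fun j hj => pow_le_pow_of_le_one hq0.le hq1.le
        (by simp [Finset.mem_range] at hj; omega))
      ⟨0, by simp [Finset.mem_range]; omega,
        by simpa using pow_lt_one₀ hq0.le hq1 (by omega : i - 1 ≠ 0)⟩
    simpa [Finset.sum_const, Finset.card_range, nsmul_eq_mul] using h
  nlinarith

/-- if `f` is the generating function of a supercritical offspring law with
fixed point `q ∈ (0,1)`, then `|q - f^[K](0)| ≤ exp(-cK)` for some `c > 0` and all `K ≥ 1`. -/
theorem stmt6
    (pX : Measure ℕ) [IsProbabilityMeasure pX]
    (hmean : 1 < ∑' n : ℕ, (n : ℝ≥0∞) * pX {n})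
    (h0 : 0 < pX {0})
    (f : ℝ → ℝ)
    (hf : ∀ x : ℝ, f x = ∑' i : ℕ, (pX {i}).toReal * x ^ i)
    (q : ℝ) (hq01 : q ∈ Set.Ioo (0 : ℝ) 1)
    (hq : f q = q) :
    ∃ c > (0 : ℝ), ∀ K : ℕ, 1 ≤ K → |q - f^[K] 0| ≤ Real.exp (-c * K) := by
  obtain ⟨hq0, hq1⟩ := hq01
  set p : ℕ → ℝ := fun i => (pX {i}).toReal with hpdef
  have hfin : ∀ i : ℕ, pX {i} ≠ ⊤ := fun i => (measure_lt_top pX _).ne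
  have hp0 : ∀ i, 0 ≤ p i := fun i => ENNReal.toReal_nonneg
  have hp1 : ∀ i, p i ≤ 1 := fun i => by
    have := prob_le_one (μ := pX) (s := {i})
    simpa [hpdef] using ENNReal.toReal_mono (by simp) this
  have htsum1 : ∑' i : ℕ, pX {i} = 1 := by
    have h : ⋃ i : ℕ, ({i} : Set ℕ) = Set.univ := by ext x; simp
    rw [← measure_iUnion (fun i j hij => by simpa using hij)
      (fun i => measurableSet_singleton i), h, measure_univ]
  have hsump : Summable p :=
    ENNReal.summable_toReal (by rw [htsum1]; exact ENNReal.one_ne_top)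
  have hsump1 : ∑' i, p i = 1 := by
    rw [hpdef, ← ENNReal.tsum_toReal_eq hfin, htsum1, ENNReal.toReal_one]
  -- summability of ∑ p_i x^i for x ∈ [0,1]
  have hsummx : ∀ x : ℝ, 0 ≤ x → x ≤ 1 → Summable (fun i => p i * x ^ i) := by
    intro x hx hx1
    refine Summable.of_nonneg_of_le
      (fun i => mul_nonneg (hp0 i) (pow_nonneg hx i)) (fun i => ?_) hsump
    calc p i * x ^ i ≤ p i * 1 :=
          mul_le_mul_of_nonneg_left (pow_le_one₀ hx hx1) (hp0 i)
      _ = p i := mul_one _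
  have hsummq : Summable (fun i => p i * q ^ i) := hsummx q hq0.le hq1.le
  have hfq : ∑' i, p i * q ^ i = q := by rw [← hf q]; exact hq
  -- summability of i * q^(i-1) and of L's summand
  have hg1 : Summable (fun n : ℕ => ((n : ℝ) + 1) * q ^ n) := by
    have ha := summable_pow_mul_geometric_of_norm_lt_one (R := ℝ) 1
      (r := q) (by rw [Real.norm_eq_abs, abs_of_pos hq0]; exact hq1)
    have hb : Summable (fun n : ℕ => q ^ n) :=
      summable_geometric_of_lt_one hq0.le hq1
    exact (ha.add hb).congr (fun n => by push_cast; ring)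
  have hsumg : Summable (fun i : ℕ => (i : ℝ) * q ^ (i - 1)) := by
    rw [← summable_nat_add_iff 1]
    exact hg1.congr (fun n => by
      simp only [Nat.add_sub_cancel]; push_cast; ring)
  have hsumL : Summable (fun i : ℕ => p i * ((i : ℝ) * q ^ (i - 1))) := by
    refine Summable.of_nonneg_of_le (fun i => mul_nonneg (hp0 i)
      (mul_nonneg (Nat.cast_nonneg i) (pow_nonneg hq0.le _))) (fun i => ?_) hsumg
    exact mul_le_of_le_one_left
      (mul_nonneg (Nat.cast_nonneg i) (pow_nonneg hq0.le _)) (hp1 i)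
  set L : ℝ := ∑' i, p i * ((i : ℝ) * q ^ (i - 1)) with hLdef
  have hL0 : 0 ≤ L := tsum_nonneg (fun i => mul_nonneg (hp0 i)
    (mul_nonneg (Nat.cast_nonneg i) (pow_nonneg hq0.le _)))
  -- existence of i₀ ≥ 2 with positive mass
  have hex : ∃ i : ℕ, 2 ≤ i ∧ 0 < pX {i} := by
    by_contra hc
    push_neg at hc
    have hz : ∀ i : ℕ, 2 ≤ i → pX {i} = 0 :=
      fun i hi => le_antisymm (hc i hi) zero_le
    have heq : ∑' n : ℕ, (n : ℝ≥0∞) * pX {n} = pX {1} := by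
      rw [tsum_eq_single 1]
      · simp
      · intro b hb
        rcases Nat.eq_zero_or_pos b with h | h
        · simp [h]
        · rw [hz b (by omega)]; simp
    rw [heq] at hmean
    exact absurd hmean (not_lt.mpr prob_le_one)
  obtain ⟨i₀, hi₀2, hi₀pos⟩ := hex
  have hpi₀ : 0 < p i₀ := ENNReal.toReal_pos hi₀pos.ne' (hfin i₀)
  -- L < 1
  have hL1 : L < 1 := by
    have hsub : Summable (fun i => p i * (1 - q ^ i)) :=
      (hsump.sub hsummq).congr (fun i => by ring)
    have heq1 : ∑' i, p i * (1 - q ^ i) = 1 - q := by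
      calc ∑' i, p i * (1 - q ^ i) = ∑' i, (p i - p i * q ^ i) := by
            refine tsum_congr (fun i => by ring)
        _ = (∑' i, p i) - ∑' i, p i * q ^ i := Summable.tsum_sub hsump hsummq
        _ = 1 - q := by rw [hsump1, hfq]
    have hlt : ∑' i, p i * ((i : ℝ) * q ^ (i - 1)) * (1 - q)
        < ∑' i, p i * (1 - q ^ i) := by
      refine Summable.tsum_lt_tsum (i := i₀) (fun i => ?_) ?_
        (hsumL.mul_right (1 - q)) hsub
      · have h := geom_le_aux' hq0 hq1 i
        calc p i * ((i : ℝ) * q ^ (i - 1)) * (1 - q)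
            = p i * ((i : ℝ) * q ^ (i - 1) * (1 - q)) := by ring
          _ ≤ p i * (1 - q ^ i) := mul_le_mul_of_nonneg_left h (hp0 i)
      · have h := geom_lt_aux' hq0 hq1 hi₀2
        calc p i₀ * ((i₀ : ℝ) * q ^ (i₀ - 1)) * (1 - q)
            = p i₀ * ((i₀ : ℝ) * q ^ (i₀ - 1) * (1 - q)) := by ring
          _ < p i₀ * (1 - q ^ i₀) := by
              exact mul_lt_mul_of_pos_left h hpi₀
    rw [tsum_mul_right, heq1] at hlt
    have h1q : 0 < 1 - q := by linarith
    nlinarith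
  -- contraction step
  have hstep : ∀ x : ℝ, 0 ≤ x → x ≤ q →
      0 ≤ f x ∧ f x ≤ q ∧ q - f x ≤ L * (q - x) := by
    intro x hx hxq
    have hx1 : x ≤ 1 := hxq.trans hq1.le
    have hsx : Summable (fun i => p i * x ^ i) := hsummx x hx hx1
    have hfx : f x = ∑' i, p i * x ^ i := hf x
    refine ⟨?_, ?_, ?_⟩
    · rw [hfx]
      exact tsum_nonneg (fun i => mul_nonneg (hp0 i) (pow_nonneg hx i))
    · rw [hfx, ← hfq]
      exact Summable.tsum_le_tsum (fun i => mul_le_mul_of_nonneg_left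
        (pow_le_pow_left₀ hx hxq i) (hp0 i)) hsx hsummq
    · have hdiff : q - f x = ∑' i, (p i * q ^ i - p i * x ^ i) := by
        rw [Summable.tsum_sub hsummq hsx, hfq, ← hfx]
      have hb : ∀ i : ℕ, p i * q ^ i - p i * x ^ i
          ≤ (q - x) * (p i * ((i : ℝ) * q ^ (i - 1))) := by
        intro i
        have h := pow_sub_pow_aux' hx hxq i
        calc p i * q ^ i - p i * x ^ i = p i * (q ^ i - x ^ i) := by ring
          _ ≤ p i * ((q - x) * ((i : ℝ) * q ^ (i - 1))) :=
              mul_le_mul_of_nonneg_left h (hp0 i)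
          _ = (q - x) * (p i * ((i : ℝ) * q ^ (i - 1))) := by ring
      have hle : q - f x ≤ ∑' i, (q - x) * (p i * ((i : ℝ) * q ^ (i - 1))) := by
        rw [hdiff]
        exact Summable.tsum_le_tsum hb ((hsummq.sub hsx).congr (fun i => rfl))
          (hsumL.mul_left (q - x))
      rw [tsum_mul_left] at hle
      linarith
  -- induction
  have hmain : ∀ K : ℕ, 0 ≤ f^[K] 0 ∧ f^[K] 0 ≤ q ∧ q - f^[K] 0 ≤ L ^ K * q := by
    intro K
    induction K with
    | zero => exact ⟨le_refl 0, hq0.le, by simp⟩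
    | succ n ih =>
      obtain ⟨h1, h2, h3⟩ := ih
      rw [Function.iterate_succ_apply']
      obtain ⟨g1, g2, g3⟩ := hstep _ h1 h2
      refine ⟨g1, g2, ?_⟩
      calc q - f (f^[n] 0) ≤ L * (q - f^[n] 0) := g3
        _ ≤ L * (L ^ n * q) := mul_le_mul_of_nonneg_left h3 hL0
        _ = L ^ (n + 1) * q := by ring
  -- conclusion
  set M : ℝ := max L (Real.exp (-1)) with hMdef
  have hM0 : 0 < M := lt_of_lt_of_le (Real.exp_pos _) (le_max_right _ _)
  have hM1 : M < 1 := max_lt hL1 (Real.exp_lt_one_iff.mpr (by norm_num))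
  refine ⟨-Real.log M, neg_pos.mpr (Real.log_neg hM0 hM1), ?_⟩
  intro K _
  obtain ⟨h1, h2, h3⟩ := hmain K
  rw [abs_of_nonneg (by linarith)]
  have hLM : L ^ K * q ≤ M ^ K := by
    calc L ^ K * q ≤ M ^ K * 1 :=
          mul_le_mul (pow_le_pow_left₀ hL0 (le_max_left _ _) K) hq1.le hq0.le
            (pow_nonneg hM0.le K)
      _ = M ^ K := mul_one _
  have hexp : Real.exp (- -Real.log M * K) = M ^ K := by
    rw [neg_neg, mul_comm, Real.exp_nat_mul, Real.exp_log hM0]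
  rw [hexp]
  linarith
end

section
/- Let μ⋆ > 1 be strictly less than the mean of a supercritical offspring distribution X with X(0) > 0. Then there exist δ > 0 and β > 0 such that for all integers k ≥ 0 and all n ≥ 1, P(Z^n_k > δ μ⋆^k) ≥ β, where Z^n is the Galton-Watson process with offspring X started from n individuals. -/
open MeasureTheory ProbabilityTheory Filter
open scoped ENNReal

/-- Galton-Watson process with offspring array `ξ`, started from `a` individuals. -/
noncomputable def gw {Ω : Type*} (ξ : ℕ × ℕ → Ω → ℕ) (a : ℕ) : ℕ → Ω → ℕ
  | 0 => fun _ => a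
  | k + 1 => fun ω => ∑ i ∈ Finset.range (gw ξ a k ω), ξ (k, i) ω

/-- Galton-Watson process censored at level `N`, started at `N`. -/
noncomputable def cgw {Ω : Type*} (ξ : ℕ × ℕ → Ω → ℕ) (N : ℕ) : ℕ → Ω → ℕ
  | 0 => fun _ => N
  | k + 1 => fun ω =>
      if 0 < cgw ξ N k ω then min N (∑ i ∈ Finset.range (cgw ξ N k ω), ξ (k, i) ω) else 0

lemma gw_mono_start {Ω : Type*} (ξ : ℕ × ℕ → Ω → ℕ) {a b : ℕ} (h : a ≤ b) (k : ℕ) (ω : Ω) :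
    gw ξ a k ω ≤ gw ξ b k ω := by
  induction k with
  | zero => exact h
  | succ k ih =>
    simp only [gw]
    exact Finset.sum_le_sum_of_subset (Finset.range_subset_range.2 ih)

lemma gw_mono_off {Ω : Type*} {ξ₁ ξ₂ : ℕ × ℕ → Ω → ℕ} (h : ∀ p ω, ξ₁ p ω ≤ ξ₂ p ω)
    (a k : ℕ) (ω : Ω) : gw ξ₁ a k ω ≤ gw ξ₂ a k ω := by
  induction k with
  | zero => exact le_rfl
  | succ k ih =>
    simp only [gw]
    calc ∑ i ∈ Finset.range (gw ξ₁ a k ω), ξ₁ (k, i) ω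
        ≤ ∑ i ∈ Finset.range (gw ξ₁ a k ω), ξ₂ (k, i) ω :=
          Finset.sum_le_sum fun i _ => h _ _
      _ ≤ _ := Finset.sum_le_sum_of_subset (Finset.range_subset_range.2 ih)

lemma gw_le_pow {Ω : Type*} {ξ : ℕ × ℕ → Ω → ℕ} {L : ℕ} (h : ∀ p ω, ξ p ω ≤ L)
    (k : ℕ) (ω : Ω) : gw ξ 1 k ω ≤ L ^ k := by
  induction k with
  | zero => simp [gw]
  | succ k ih =>
    simp only [gw]
    calc ∑ i ∈ Finset.range (gw ξ 1 k ω), ξ (k, i) ω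
        ≤ ∑ _i ∈ Finset.range (gw ξ 1 k ω), L := Finset.sum_le_sum fun i _ => h _ _
      _ = gw ξ 1 k ω * L := by simp [mul_comm]
      _ ≤ L ^ k * L := by exact Nat.mul_le_mul_right _ ih
      _ = L ^ (k + 1) := by ring

lemma gw_congr {Ω₁ Ω₂ : Type*} {ξ₁ : ℕ × ℕ → Ω₁ → ℕ} {ξ₂ : ℕ × ℕ → Ω₂ → ℕ}
    {ω₁ : Ω₁} {ω₂ : Ω₂} {a : ℕ} :
    ∀ {k : ℕ}, (∀ j i, j < k → i < gw ξ₁ a j ω₁ → ξ₁ (j, i) ω₁ = ξ₂ (j, i) ω₂) →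
      gw ξ₁ a k ω₁ = gw ξ₂ a k ω₂
  | 0, _ => rfl
  | k + 1, h => by
    have hk : gw ξ₁ a k ω₁ = gw ξ₂ a k ω₂ :=
      gw_congr fun j i hj hi => h j i (Nat.lt_succ_of_lt hj) hi
    simp only [gw, ← hk]
    exact Finset.sum_congr rfl fun i hi =>
      h k i (Nat.lt_succ_self k) (Finset.mem_range.1 hi)

lemma measurable_sum_range {Ω : Type*} [MeasurableSpace Ω] {f : Ω → ℕ} {g : ℕ → Ω → ℕ}
    (hf : Measurable f) (hg : ∀ i, Measurable (g i)) :
    Measurable fun ω => ∑ i ∈ Finset.range (f ω), g i ω := by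
  have : (fun ω => ∑ i ∈ Finset.range (f ω), g i ω) =
      (fun q : Ω × ℕ => ∑ i ∈ Finset.range q.2, g i q.1) ∘ (fun ω => (ω, f ω)) := rfl
  rw [this]
  refine Measurable.comp ?_ (measurable_id.prodMk hf)
  refine measurable_from_prod_countable_left fun n => ?_
  simpa using Finset.measurable_sum (Finset.range n) fun i _ => hg i

lemma measurable_gw {Ω : Type*} [MeasurableSpace Ω] {ξ : ℕ × ℕ → Ω → ℕ}
    (h : ∀ p, Measurable (ξ p)) (a k : ℕ) : Measurable (gw ξ a k) := by
  induction k with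
  | zero => exact measurable_const
  | succ k ih => exact measurable_sum_range ih fun i => h (k, i)

section Indep

variable {Ω : Type*} [MeasurableSpace Ω] {μ : MeasureTheory.Measure Ω}
  {ξ : ℕ × ℕ → Ω → ℕ} {L : ℕ}

/-- The generation-`k` population is independent of the pair of offspring counts
`(ξ (k,i), ξ (k,j))`. -/
lemma gw_indep (hb : ∀ p ω, ξ p ω ≤ L) (hL : 1 ≤ L)
    (hm : ∀ p, Measurable (ξ p))
    (hi : iIndepFun ξ μ) (k i j : ℕ) :
    IndepFun (gw ξ 1 k) (fun ω => (ξ (k, i) ω, ξ (k, j) ω)) μ := by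
  classical
  set S : Finset (ℕ × ℕ) := Finset.range k ×ˢ Finset.range (L ^ k) with hS
  set T : Finset (ℕ × ℕ) := {(k, i), (k, j)} with hT
  have hST : Disjoint S T := by
    rw [Finset.disjoint_left]
    rintro ⟨a, b⟩ haS haT
    have ha : a < k := (Finset.mem_product.1 haS).1 |> Finset.mem_range.1
    rcases Finset.mem_insert.1 haT with h | h
    · exact absurd (congrArg Prod.fst h) (by simpa using ha.ne)
    · exact absurd (congrArg Prod.fst (Finset.mem_singleton.1 h)) (by simpa using ha.ne)
  have base := hi.indepFun_finset S T hST hm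
  have hiS : (k, i) ∈ T := by simp [hT]
  have hjS : (k, j) ∈ T := by simp [hT]
  let φ : ((p : S) → ℕ) → ℕ := fun v =>
    gw (fun p (_ : Unit) => if h : p ∈ S then v ⟨p, h⟩ else 0) 1 k ()
  let ψ : ((p : T) → ℕ) → ℕ × ℕ := fun v => (v ⟨(k, i), hiS⟩, v ⟨(k, j), hjS⟩)
  have key := base.comp (φ := φ) (ψ := ψ) (measurable_of_countable φ)
    (measurable_of_countable ψ)
  have h1 : (φ ∘ fun ω (p : S) => ξ p ω) = gw ξ 1 k := by
    funext ω
    refine (gw_congr ?_).symm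
    rintro j' i' hj' hi'
    have hmem : ((j', i') : ℕ × ℕ) ∈ S := by
      refine Finset.mem_product.2 ⟨Finset.mem_range.2 hj', Finset.mem_range.2 ?_⟩
      calc i' < gw ξ 1 j' ω := hi'
        _ ≤ L ^ j' := gw_le_pow hb j' ω
        _ ≤ L ^ k := Nat.pow_le_pow_right hL hj'.le
    simp [hmem]
  have h2 : (ψ ∘ fun ω (p : T) => ξ p ω) = fun ω => (ξ (k, i) ω, ξ (k, j) ω) := rfl
  rw [h1, h2] at key
  exact key

end Indep

set_option linter.unusedSectionVars false

section Moments

variable {Ω : Type*} [MeasurableSpace Ω] {μ : MeasureTheory.Measure Ω}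
  [MeasureTheory.IsProbabilityMeasure μ]

lemma integrable_bdd {f : Ω → ℝ} (hf : MeasureTheory.AEStronglyMeasurable f μ) (C : ℝ)
    (h : ∀ ω, |f ω| ≤ C) : MeasureTheory.Integrable f μ :=
  (MeasureTheory.integrable_const C).mono' hf
    (Filter.Eventually.of_forall (by simpa [Real.norm_eq_abs] using h))

lemma ite_eq_indicator {f : Ω → ℕ} (z : ℕ) (c : ℝ) :
    (fun ω => if f ω = z then c else 0) = Set.indicator (f ⁻¹' {z}) (fun _ => c) := by
  funext ω
  by_cases h : f ω = z <;> simp [Set.indicator_apply, Set.mem_preimage, h]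

lemma integrable_ite_eq {f : Ω → ℕ} (hf : Measurable f) (z : ℕ) (c : ℝ) :
    MeasureTheory.Integrable (fun ω => if f ω = z then c else 0) μ := by
  rw [ite_eq_indicator]
  exact (MeasureTheory.integrable_const c).indicator (hf (measurableSet_singleton z))

lemma integral_ite_eq {f : Ω → ℕ} (hf : Measurable f) (z : ℕ) (c : ℝ) :
    ∫ ω, (if f ω = z then c else 0) ∂μ = (μ {ω | f ω = z}).toReal * c := by
  rw [ite_eq_indicator, MeasureTheory.integral_indicator_const c (hf (measurableSet_singleton z))]
  rfl

/-- Expectation of `φ ∘ f` for a bounded `ℕ`-valued random variable, as a finite sum. -/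
lemma integral_nat_comp {f : Ω → ℕ} (hf : Measurable f) {B : ℕ} (hB : ∀ ω, f ω ≤ B)
    (φ : ℕ → ℝ) :
    ∫ ω, φ (f ω) ∂μ
      = ∑ z ∈ Finset.range (B + 1), (μ {ω | f ω = z}).toReal * φ z := by
  have hpt : ∀ ω, φ (f ω) = ∑ z ∈ Finset.range (B + 1), if f ω = z then φ z else 0 := by
    intro ω
    rw [Finset.sum_ite_eq (Finset.range (B + 1)) (f ω) φ]
    simp [Nat.lt_succ_of_le (hB ω)]
  calc ∫ ω, φ (f ω) ∂μ
      = ∫ ω, ∑ z ∈ Finset.range (B + 1), (if f ω = z then φ z else 0) ∂μ := by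
        congr 1; funext ω; exact hpt ω
    _ = ∑ z ∈ Finset.range (B + 1), ∫ ω, (if f ω = z then φ z else 0) ∂μ :=
        MeasureTheory.integral_finset_sum _ fun z _ => integrable_ite_eq hf z (φ z)
    _ = _ := Finset.sum_congr rfl fun z _ => integral_ite_eq hf z (φ z)

end Moments

section Rec

open MeasureTheory

variable {Ω : Type*} [MeasurableSpace Ω] {μ : Measure Ω} [IsProbabilityMeasure μ]
  {ξ : ℕ × ℕ → Ω → ℕ} {L : ℕ}

lemma integrable_ind_mul {Z : Ω → ℕ} (hZ : Measurable Z) (z : ℕ) {g : Ω → ℝ}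
    (hg : Measurable g) {C : ℝ} (hC : 0 ≤ C) (hgb : ∀ ω, |g ω| ≤ C) :
    Integrable (fun ω => (if Z ω = z then (1 : ℝ) else 0) * g ω) μ := by
  refine integrable_bdd ?_ C fun ω => ?_
  · exact ((Measurable.ite (hZ (measurableSet_singleton z)) measurable_const
      measurable_const).mul hg).aestronglyMeasurable
  · by_cases h : Z ω = z <;> simp [h, abs_mul, hgb ω, hC]

lemma xi_cast_meas (hm : ∀ p, Measurable (ξ p)) (p : ℕ × ℕ) :
    Measurable fun ω => (ξ p ω : ℝ) :=
  (measurable_of_countable _).comp (hm p)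

lemma xi_cast_bdd (hb : ∀ p ω, ξ p ω ≤ L) (p : ℕ × ℕ) (ω : Ω) :
    |(ξ p ω : ℝ)| ≤ (L : ℝ) := by
  rw [abs_of_nonneg (by positivity)]
  exact_mod_cast hb p ω

lemma xi_int (hb : ∀ p ω, ξ p ω ≤ L) (hm : ∀ p, Measurable (ξ p)) (p : ℕ × ℕ) :
    Integrable (fun ω => (ξ p ω : ℝ)) μ :=
  integrable_bdd (xi_cast_meas hm p).aestronglyMeasurable _ (xi_cast_bdd hb p)

lemma xi_exp (hm : ∀ p, Measurable (ξ p))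
    (hid : ∀ p q, Measure.map (ξ p) μ = Measure.map (ξ q) μ) (p : ℕ × ℕ) :
    ∫ ω, (ξ p ω : ℝ) ∂μ = ∫ ω, (ξ (0, 0) ω : ℝ) ∂μ := by
  have h1 : ∀ q : ℕ × ℕ, ∫ ω, (ξ q ω : ℝ) ∂μ = ∫ n, (n : ℝ) ∂(Measure.map (ξ q) μ) := by
    intro q
    rw [integral_map (hm q).aemeasurable
      (measurable_of_countable (fun n : ℕ => (n : ℝ))).aestronglyMeasurable]
  rw [h1 p, h1 (0, 0), hid p (0, 0)]

lemma xi_exp_sq (hm : ∀ p, Measurable (ξ p))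
    (hid : ∀ p q, Measure.map (ξ p) μ = Measure.map (ξ q) μ) (p : ℕ × ℕ) :
    ∫ ω, (ξ p ω : ℝ) ^ 2 ∂μ = ∫ ω, (ξ (0, 0) ω : ℝ) ^ 2 ∂μ := by
  have h1 : ∀ q : ℕ × ℕ, ∫ ω, (ξ q ω : ℝ) ^ 2 ∂μ
      = ∫ n, ((n : ℝ) ^ 2) ∂(Measure.map (ξ q) μ) := by
    intro q
    rw [integral_map (hm q).aemeasurable
      (measurable_of_countable (fun n : ℕ => (n : ℝ) ^ 2)).aestronglyMeasurable]
  rw [h1 p, h1 (0, 0), hid p (0, 0)]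

/-- `E[1_{Z_k = z} · ξ_{k,i}] = P(Z_k = z) · E[ξ_{k,i}]`. -/
lemma E_ind_mul (hb : ∀ p ω, ξ p ω ≤ L) (hL : 1 ≤ L) (hm : ∀ p, Measurable (ξ p))
    (hi : iIndepFun ξ μ) (k z i : ℕ) :
    ∫ ω, (if gw ξ 1 k ω = z then (1 : ℝ) else 0) * (ξ (k, i) ω : ℝ) ∂μ
      = (μ {ω | gw ξ 1 k ω = z}).toReal * ∫ ω, (ξ (k, i) ω : ℝ) ∂μ := by
  have ind := gw_indep hb hL hm hi k i i
  have key := ind.comp (φ := fun n => if n = z then (1 : ℝ) else 0)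
    (ψ := fun pr : ℕ × ℕ => (pr.1 : ℝ)) (measurable_of_countable _) (measurable_of_countable _)
  have h := key.integral_mul_eq_mul_integral
    (integrable_ite_eq (measurable_gw hm 1 k) z 1).aestronglyMeasurable (xi_int hb hm (k, i)).aestronglyMeasurable
  calc ∫ ω, (if gw ξ 1 k ω = z then (1 : ℝ) else 0) * (ξ (k, i) ω : ℝ) ∂μ
      = ∫ ω, ((fun n => if n = z then (1 : ℝ) else 0) ∘ gw ξ 1 k) ω
          * ((fun pr : ℕ × ℕ => (pr.1 : ℝ)) ∘ fun ω => (ξ (k, i) ω, ξ (k, i) ω)) ω ∂μ := rfl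
    _ = (∫ ω, (if gw ξ 1 k ω = z then (1 : ℝ) else 0) ∂μ) * ∫ ω, (ξ (k, i) ω : ℝ) ∂μ := h
    _ = _ := by rw [integral_ite_eq (measurable_gw hm 1 k) z 1, mul_one]

/-- `E[1_{Z_k = z} · ξ_{k,i} · ξ_{k,j}] = P(Z_k = z) · E[ξ_{k,i}] · E[ξ_{k,j}]` for `i ≠ j`. -/
lemma E_ind_mul2 (hb : ∀ p ω, ξ p ω ≤ L) (hL : 1 ≤ L) (hm : ∀ p, Measurable (ξ p))
    (hi : iIndepFun ξ μ) (k z : ℕ) {i j : ℕ} (hij : i ≠ j) :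
    ∫ ω, (if gw ξ 1 k ω = z then (1 : ℝ) else 0) * ((ξ (k, i) ω : ℝ) * (ξ (k, j) ω : ℝ)) ∂μ
      = (μ {ω | gw ξ 1 k ω = z}).toReal
          * ((∫ ω, (ξ (k, i) ω : ℝ) ∂μ) * ∫ ω, (ξ (k, j) ω : ℝ) ∂μ) := by
  have ind := gw_indep hb hL hm hi k i j
  have key := ind.comp (φ := fun n => if n = z then (1 : ℝ) else 0)
    (ψ := fun pr : ℕ × ℕ => (pr.1 : ℝ) * (pr.2 : ℝ))
    (measurable_of_countable _) (measurable_of_countable _)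
  have hprod : Integrable (fun ω => (ξ (k, i) ω : ℝ) * (ξ (k, j) ω : ℝ)) μ := by
    refine integrable_bdd ((xi_cast_meas hm _).mul (xi_cast_meas hm _)).aestronglyMeasurable
      ((L : ℝ) * L) fun ω => ?_
    rw [abs_mul]
    exact mul_le_mul (xi_cast_bdd hb _ ω) (xi_cast_bdd hb _ ω) (abs_nonneg _) (by positivity)
  have h := key.integral_mul_eq_mul_integral (integrable_ite_eq (measurable_gw hm 1 k) z 1).aestronglyMeasurable hprod.aestronglyMeasurable
  have hpair : IndepFun (ξ (k, i)) (ξ (k, j)) μ := hi.indepFun (by simp [hij])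
  have hpair' := hpair.comp (φ := fun n : ℕ => (n : ℝ)) (ψ := fun n : ℕ => (n : ℝ))
    (measurable_of_countable _) (measurable_of_countable _)
  have h2 := hpair'.integral_mul_eq_mul_integral (xi_int hb hm (k, i)).aestronglyMeasurable (xi_int hb hm (k, j)).aestronglyMeasurable
  calc ∫ ω, (if gw ξ 1 k ω = z then (1 : ℝ) else 0) * ((ξ (k, i) ω : ℝ) * (ξ (k, j) ω : ℝ)) ∂μ
      = (∫ ω, (if gw ξ 1 k ω = z then (1 : ℝ) else 0) ∂μ)
          * ∫ ω, (ξ (k, i) ω : ℝ) * (ξ (k, j) ω : ℝ) ∂μ := h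
    _ = _ := by
        rw [integral_ite_eq (measurable_gw hm 1 k) z 1, mul_one]
        exact congrArg (fun r => (μ {ω | gw ξ 1 k ω = z}).toReal * r) h2

/-- `E[1_{Z_k = z} · ξ_{k,i}²] = P(Z_k = z) · E[ξ²]`. -/
lemma E_ind_mul_sq (hb : ∀ p ω, ξ p ω ≤ L) (hL : 1 ≤ L) (hm : ∀ p, Measurable (ξ p))
    (hi : iIndepFun ξ μ) (k z i : ℕ) :
    ∫ ω, (if gw ξ 1 k ω = z then (1 : ℝ) else 0) * ((ξ (k, i) ω : ℝ) * (ξ (k, i) ω : ℝ)) ∂μ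
      = (μ {ω | gw ξ 1 k ω = z}).toReal * ∫ ω, (ξ (k, i) ω : ℝ) ^ 2 ∂μ := by
  have ind := gw_indep hb hL hm hi k i i
  have key := ind.comp (φ := fun n => if n = z then (1 : ℝ) else 0)
    (ψ := fun pr : ℕ × ℕ => (pr.1 : ℝ) * (pr.2 : ℝ))
    (measurable_of_countable _) (measurable_of_countable _)
  have hprod : Integrable (fun ω => (ξ (k, i) ω : ℝ) * (ξ (k, i) ω : ℝ)) μ := by
    refine integrable_bdd ((xi_cast_meas hm _).mul (xi_cast_meas hm _)).aestronglyMeasurable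
      ((L : ℝ) * L) fun ω => ?_
    rw [abs_mul]
    exact mul_le_mul (xi_cast_bdd hb _ ω) (xi_cast_bdd hb _ ω) (abs_nonneg _) (by positivity)
  have h := key.integral_mul_eq_mul_integral (integrable_ite_eq (measurable_gw hm 1 k) z 1).aestronglyMeasurable hprod.aestronglyMeasurable
  calc ∫ ω, (if gw ξ 1 k ω = z then (1 : ℝ) else 0) * ((ξ (k, i) ω : ℝ) * (ξ (k, i) ω : ℝ)) ∂μ
      = (∫ ω, (if gw ξ 1 k ω = z then (1 : ℝ) else 0) ∂μ)
          * ∫ ω, (ξ (k, i) ω : ℝ) * (ξ (k, i) ω : ℝ) ∂μ := h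
    _ = _ := by
        rw [integral_ite_eq (measurable_gw hm 1 k) z 1, mul_one]
        congr 1
        congr 1
        funext ω
        ring

end Rec

section Rec2

open MeasureTheory

variable {Ω : Type*} [MeasurableSpace Ω] {μ : Measure Ω} [IsProbabilityMeasure μ]
  {ξ : ℕ × ℕ → Ω → ℕ} {L : ℕ}

lemma pick {Z : Ω → ℕ} {B : ℕ} (hZ : ∀ ω, Z ω ≤ B) (g : ℕ → ℝ) (ω : Ω) :
    g (Z ω) = ∑ z ∈ Finset.range (B + 1), (if Z ω = z then (1 : ℝ) else 0) * g z := by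
  have h := Finset.sum_ite_eq (Finset.range (B + 1)) (Z ω) g
  simp only [Finset.mem_range, Nat.lt_succ_of_le (hZ ω), if_true] at h
  rw [← h]
  exact Finset.sum_congr rfl fun z _ => by by_cases hc : Z ω = z <;> simp [hc]

lemma e_rec (hb : ∀ p ω, ξ p ω ≤ L) (hL : 1 ≤ L) (hm : ∀ p, Measurable (ξ p))
    (hi : iIndepFun ξ μ)
    (hid : ∀ p q, Measure.map (ξ p) μ = Measure.map (ξ q) μ) (k : ℕ) :
    ∫ ω, (gw ξ 1 (k + 1) ω : ℝ) ∂μ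
      = (∫ ω, (ξ (0, 0) ω : ℝ) ∂μ) * ∫ ω, (gw ξ 1 k ω : ℝ) ∂μ := by
  set B := L ^ k with hB
  have hZb : ∀ ω, gw ξ 1 k ω ≤ B := fun ω => gw_le_pow hb k ω
  have hpt : ∀ ω, (gw ξ 1 (k + 1) ω : ℝ)
      = ∑ z ∈ Finset.range (B + 1), ∑ i ∈ Finset.range z,
          (if gw ξ 1 k ω = z then (1 : ℝ) else 0) * (ξ (k, i) ω : ℝ) := by
    intro ω
    have h1 : (gw ξ 1 (k + 1) ω : ℝ) = ∑ i ∈ Finset.range (gw ξ 1 k ω), (ξ (k, i) ω : ℝ) := by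
      simp [gw]
    rw [h1, pick hZb (fun z => ∑ i ∈ Finset.range z, (ξ (k, i) ω : ℝ)) ω]
    exact Finset.sum_congr rfl fun z _ => Finset.mul_sum _ _ _
  have hint : ∀ z i : ℕ, Integrable
      (fun ω => (if gw ξ 1 k ω = z then (1 : ℝ) else 0) * (ξ (k, i) ω : ℝ)) μ :=
    fun z i => integrable_ind_mul (measurable_gw hm 1 k) z (xi_cast_meas hm _)
      (by positivity) (xi_cast_bdd hb _)
  calc ∫ ω, (gw ξ 1 (k + 1) ω : ℝ) ∂μ
      = ∫ ω, ∑ z ∈ Finset.range (B + 1), ∑ i ∈ Finset.range z,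
          (if gw ξ 1 k ω = z then (1 : ℝ) else 0) * (ξ (k, i) ω : ℝ) ∂μ := by
        congr 1; funext ω; exact hpt ω
    _ = ∑ z ∈ Finset.range (B + 1), ∑ i ∈ Finset.range z,
          ∫ ω, (if gw ξ 1 k ω = z then (1 : ℝ) else 0) * (ξ (k, i) ω : ℝ) ∂μ := by
        rw [integral_finset_sum _ fun z _ => integrable_finset_sum _ fun i _ => hint z i]
        exact Finset.sum_congr rfl fun z _ => integral_finset_sum _ fun i _ => hint z i
    _ = ∑ z ∈ Finset.range (B + 1), ∑ i ∈ Finset.range z,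
          (μ {ω | gw ξ 1 k ω = z}).toReal * ∫ ω, (ξ (0, 0) ω : ℝ) ∂μ := by
        refine Finset.sum_congr rfl fun z _ => Finset.sum_congr rfl fun i _ => ?_
        rw [E_ind_mul hb hL hm hi k z i, xi_exp hm hid (k, i)]
    _ = ∑ z ∈ Finset.range (B + 1),
          (μ {ω | gw ξ 1 k ω = z}).toReal * (z : ℝ) * ∫ ω, (ξ (0, 0) ω : ℝ) ∂μ := by
        refine Finset.sum_congr rfl fun z _ => ?_
        rw [Finset.sum_const, Finset.card_range, nsmul_eq_mul]
        ring
    _ = _ := by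
        rw [integral_nat_comp (measurable_gw hm 1 k) hZb (fun z => (z : ℝ)),
          Finset.mul_sum]
        exact Finset.sum_congr rfl fun z _ => by ring

lemma v_rec (hb : ∀ p ω, ξ p ω ≤ L) (hL : 1 ≤ L) (hm : ∀ p, Measurable (ξ p))
    (hi : iIndepFun ξ μ)
    (hid : ∀ p q, Measure.map (ξ p) μ = Measure.map (ξ q) μ) (k : ℕ) :
    ∫ ω, (gw ξ 1 (k + 1) ω : ℝ) ^ 2 ∂μ
      ≤ (∫ ω, (ξ (0, 0) ω : ℝ) ∂μ) ^ 2 * ∫ ω, (gw ξ 1 k ω : ℝ) ^ 2 ∂μ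
        + (∫ ω, (ξ (0, 0) ω : ℝ) ^ 2 ∂μ) * ∫ ω, (gw ξ 1 k ω : ℝ) ∂μ := by
  set B := L ^ k with hB
  set m := ∫ ω, (ξ (0, 0) ω : ℝ) ∂μ with hmdef
  set s := ∫ ω, (ξ (0, 0) ω : ℝ) ^ 2 ∂μ with hsdef
  have hZb : ∀ ω, gw ξ 1 k ω ≤ B := fun ω => gw_le_pow hb k ω
  have hpt : ∀ ω, (gw ξ 1 (k + 1) ω : ℝ) ^ 2
      = ∑ z ∈ Finset.range (B + 1), ∑ i ∈ Finset.range z, ∑ j ∈ Finset.range z,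
          (if gw ξ 1 k ω = z then (1 : ℝ) else 0) * ((ξ (k, i) ω : ℝ) * (ξ (k, j) ω : ℝ)) := by
    intro ω
    have h2 := pick hZb (fun z => (∑ i ∈ Finset.range z, (ξ (k, i) ω : ℝ)) ^ 2) ω
    have h1 : (gw ξ 1 (k + 1) ω : ℝ) ^ 2
        = (∑ i ∈ Finset.range (gw ξ 1 k ω), (ξ (k, i) ω : ℝ)) ^ 2 := by
      simp [gw]
    refine (h1.trans h2).trans (Finset.sum_congr rfl fun z _ => ?_)
    beta_reduce
    rw [sq, Finset.sum_mul_sum]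
    rw [Finset.mul_sum]
    exact Finset.sum_congr rfl fun i _ => Finset.mul_sum _ _ _
  have hint : ∀ z i j : ℕ, Integrable
      (fun ω => (if gw ξ 1 k ω = z then (1 : ℝ) else 0)
        * ((ξ (k, i) ω : ℝ) * (ξ (k, j) ω : ℝ))) μ := by
    intro z i j
    refine integrable_ind_mul (measurable_gw hm 1 k) z
      ((xi_cast_meas hm _).mul (xi_cast_meas hm _)) (C := (L : ℝ) * L) (by positivity)
      fun ω => ?_
    rw [abs_mul]
    exact mul_le_mul (xi_cast_bdd hb _ ω) (xi_cast_bdd hb _ ω) (abs_nonneg _) (by positivity)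
  have hval : ∀ z : ℕ, ∀ i ∈ Finset.range z, ∀ j ∈ Finset.range z,
      ∫ ω, (if gw ξ 1 k ω = z then (1 : ℝ) else 0)
        * ((ξ (k, i) ω : ℝ) * (ξ (k, j) ω : ℝ)) ∂μ
      = (μ {ω | gw ξ 1 k ω = z}).toReal * (if i = j then s else m ^ 2) := by
    intro z i _ j _
    by_cases hij : i = j
    · subst hij
      rw [E_ind_mul_sq hb hL hm hi k z i, xi_exp_sq hm hid (k, i), if_pos rfl]
    · rw [E_ind_mul2 hb hL hm hi k z hij, xi_exp hm hid (k, i), xi_exp hm hid (k, j),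
        if_neg hij]
      ring
  have hstep : ∫ ω, (gw ξ 1 (k + 1) ω : ℝ) ^ 2 ∂μ
      = ∑ z ∈ Finset.range (B + 1), ∑ i ∈ Finset.range z, ∑ j ∈ Finset.range z,
          (μ {ω | gw ξ 1 k ω = z}).toReal * (if i = j then s else m ^ 2) := by
    calc ∫ ω, (gw ξ 1 (k + 1) ω : ℝ) ^ 2 ∂μ
        = ∫ ω, ∑ z ∈ Finset.range (B + 1), ∑ i ∈ Finset.range z, ∑ j ∈ Finset.range z,
            (if gw ξ 1 k ω = z then (1 : ℝ) else 0)
              * ((ξ (k, i) ω : ℝ) * (ξ (k, j) ω : ℝ)) ∂μ := by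
          congr 1; funext ω; exact hpt ω
      _ = ∑ z ∈ Finset.range (B + 1), ∑ i ∈ Finset.range z, ∑ j ∈ Finset.range z,
            ∫ ω, (if gw ξ 1 k ω = z then (1 : ℝ) else 0)
              * ((ξ (k, i) ω : ℝ) * (ξ (k, j) ω : ℝ)) ∂μ := by
          rw [integral_finset_sum _ fun z _ => integrable_finset_sum _ fun i _ =>
            integrable_finset_sum _ fun j _ => hint z i j]
          refine Finset.sum_congr rfl fun z _ => ?_
          rw [integral_finset_sum _ fun i _ => integrable_finset_sum _ fun j _ => hint z i j]
          exact Finset.sum_congr rfl fun i _ =>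
            integral_finset_sum _ fun j _ => hint z i j
      _ = _ := by
          refine Finset.sum_congr rfl fun z _ => Finset.sum_congr rfl fun i hi =>
            Finset.sum_congr rfl fun j hj => hval z i hi j hj
  rw [hstep, integral_nat_comp (measurable_gw hm 1 k) hZb (fun z => (z : ℝ) ^ 2),
    integral_nat_comp (measurable_gw hm 1 k) hZb (fun z => (z : ℝ))]
  rw [Finset.mul_sum, Finset.mul_sum, ← Finset.sum_add_distrib]
  refine Finset.sum_le_sum fun z _ => ?_
  set P := (μ {ω | gw ξ 1 k ω = z}).toReal with hP
  have hPnn : 0 ≤ P := ENNReal.toReal_nonneg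
  have hmsq : (0 : ℝ) ≤ m ^ 2 := sq_nonneg m
  have inner : ∀ i ∈ Finset.range z,
      ∑ j ∈ Finset.range z, P * (if i = j then s else m ^ 2)
        = P * ((z : ℝ) * m ^ 2 + (s - m ^ 2)) := by
    intro i hi
    have : ∀ j : ℕ, P * (if i = j then s else m ^ 2)
        = P * m ^ 2 + (if i = j then P * (s - m ^ 2) else 0) := by
      intro j; by_cases hij : i = j <;> simp [hij] <;> ring
    simp_rw [this]
    rw [Finset.sum_add_distrib, Finset.sum_const, Finset.card_range, nsmul_eq_mul,
      Finset.sum_ite_eq (Finset.range z) i (fun _ => P * (s - m ^ 2)), if_pos hi]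
    ring
  rw [Finset.sum_congr rfl inner, Finset.sum_const, Finset.card_range, nsmul_eq_mul]
  -- goal : z * (P * (z * m² + (s - m²))) ≤ m² * (P * z²) + s * (P * z)
  nlinarith [mul_nonneg hPnn hmsq, Nat.cast_nonneg (α := ℝ) z,
    mul_nonneg (mul_nonneg hPnn hmsq) (Nat.cast_nonneg (α := ℝ) z)]

end Rec2

section Master

open MeasureTheory

variable {Ω : Type*} [MeasurableSpace Ω] {μ : Measure Ω} [IsProbabilityMeasure μ]
  {ξ : ℕ × ℕ → Ω → ℕ} {L : ℕ}

lemma e_eq (hb : ∀ p ω, ξ p ω ≤ L) (hL : 1 ≤ L) (hm : ∀ p, Measurable (ξ p))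
    (hi : iIndepFun ξ μ)
    (hid : ∀ p q, Measure.map (ξ p) μ = Measure.map (ξ q) μ)
    {m : ℝ} (hme : ∫ ω, (ξ (0, 0) ω : ℝ) ∂μ = m) (k : ℕ) :
    ∫ ω, (gw ξ 1 k ω : ℝ) ∂μ = m ^ k := by
  induction k with
  | zero => simp [gw]
  | succ k ih => rw [e_rec hb hL hm hi hid k, ih, hme]; ring

lemma v_le (hb : ∀ p ω, ξ p ω ≤ L) (hL : 1 ≤ L) (hm : ∀ p, Measurable (ξ p))
    (hi : iIndepFun ξ μ)
    (hid : ∀ p q, Measure.map (ξ p) μ = Measure.map (ξ q) μ)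
    {m s : ℝ} (hme : ∫ ω, (ξ (0, 0) ω : ℝ) ∂μ = m)
    (hse : ∫ ω, (ξ (0, 0) ω : ℝ) ^ 2 ∂μ = s) (hm1 : 1 < m) (k : ℕ) :
    ∫ ω, (gw ξ 1 k ω : ℝ) ^ 2 ∂μ
      ≤ (1 + s / (m * (m - 1))) * m ^ (2 * k) - (s / (m * (m - 1))) * m ^ k := by
  have hmpos : (0 : ℝ) < m := lt_trans one_pos hm1
  have hm1pos : (0 : ℝ) < m - 1 := by linarith
  induction k with
  | zero => simp [gw]
  | succ k ih =>
    have h1 := v_rec hb hL hm hi hid k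
    rw [hme, hse, e_eq hb hL hm hi hid hme k] at h1
    have hsq : (0 : ℝ) ≤ m ^ 2 := sq_nonneg m
    have step : m ^ 2 * ∫ ω, (gw ξ 1 k ω : ℝ) ^ 2 ∂μ
        ≤ m ^ 2 * ((1 + s / (m * (m - 1))) * m ^ (2 * k) - (s / (m * (m - 1))) * m ^ k) :=
      mul_le_mul_of_nonneg_left ih hsq
    have key : m ^ 2 * ((1 + s / (m * (m - 1))) * m ^ (2 * k) - (s / (m * (m - 1))) * m ^ k)
        + s * m ^ k
        = (1 + s / (m * (m - 1))) * m ^ (2 * (k + 1)) - (s / (m * (m - 1))) * m ^ (k + 1) := by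
      have hne : m * (m - 1) ≠ 0 := by positivity
      field_simp
      ring
    linarith [h1, step]

lemma master (hb : ∀ p ω, ξ p ω ≤ L) (hL : 1 ≤ L) (hm : ∀ p, Measurable (ξ p))
    (hi : iIndepFun ξ μ)
    (hid : ∀ p q, Measure.map (ξ p) μ = Measure.map (ξ q) μ)
    {m : ℝ} (hme : ∫ ω, (ξ (0, 0) ω : ℝ) ∂μ = m) (hm1 : 1 < m) :
    ∃ β > (0 : ℝ), ∀ k : ℕ,
      ENNReal.ofReal β ≤ μ {ω | m ^ k / 2 < (gw ξ 1 k ω : ℝ)} := by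
  classical
  set s : ℝ := ∫ ω, (ξ (0, 0) ω : ℝ) ^ 2 ∂μ with hsdef
  have hs0 : 0 ≤ s := integral_nonneg fun ω => sq_nonneg _
  have hmpos : (0 : ℝ) < m := lt_trans one_pos hm1
  have hmm1 : (0 : ℝ) ≤ m * (m - 1) := by nlinarith
  set C : ℝ := 1 + s / (m * (m - 1)) with hCdef
  have hC1 : (1 : ℝ) ≤ C := by
    rw [hCdef]
    nlinarith [div_nonneg hs0 hmm1]
  have hCpos : (0 : ℝ) < C := lt_of_lt_of_le one_pos hC1
  refine ⟨1 / (4 * C), by positivity, fun k => ?_⟩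
  set B := L ^ k with hBdef
  have hZmeas : Measurable (gw ξ 1 k) := measurable_gw hm 1 k
  have hZb : ∀ ω, gw ξ 1 k ω ≤ B := fun ω => gw_le_pow hb k ω
  set t : ℝ := m ^ k / 2 with htdef
  have htpos : 0 < t := by positivity
  set P : ℕ → ℝ := fun z => (μ {ω | gw ξ 1 k ω = z}).toReal with hPdef
  have hPnn : ∀ z, 0 ≤ P z := fun z => ENNReal.toReal_nonneg
  -- total sum of P over any finset is ≤ 1
  have hsum1 : ∀ G : Finset ℕ, ∑ z ∈ G, P z ≤ 1 := by
    intro G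
    have hdisj : (G : Set ℕ).PairwiseDisjoint (fun z => {ω | gw ξ 1 k ω = z}) := by
      intro x _ y _ hxy
      simp only [Function.onFun, Set.disjoint_left]
      rintro ω hx hy
      exact hxy ((show gw ξ 1 k ω = x from hx).symm.trans hy)
    have hcup : ∑ z ∈ G, μ {ω | gw ξ 1 k ω = z} = μ (⋃ z ∈ G, {ω | gw ξ 1 k ω = z}) :=
      (measure_biUnion_finset hdisj fun z _ => hZmeas (measurableSet_singleton z)).symm
    have hle : ∑ z ∈ G, μ {ω | gw ξ 1 k ω = z} ≤ 1 := by
      rw [hcup]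
      exact le_trans (measure_mono (Set.subset_univ _)) (by simp)
    calc ∑ z ∈ G, P z = (∑ z ∈ G, μ {ω | gw ξ 1 k ω = z}).toReal := by
          rw [hPdef, ENNReal.toReal_sum fun z _ => measure_ne_top μ _]
      _ ≤ (1 : ℝ≥0∞).toReal := ENNReal.toReal_mono ENNReal.one_ne_top hle
      _ = 1 := by simp
  -- expectation identities
  have he : ∑ z ∈ Finset.range (B + 1), P z * (z : ℝ) = m ^ k := by
    rw [← e_eq hb hL hm hi hid hme k,
      integral_nat_comp hZmeas hZb (fun z => (z : ℝ))]
  have hv : ∑ z ∈ Finset.range (B + 1), P z * (z : ℝ) ^ 2 ≤ C * m ^ (2 * k) := by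
    have h1 := v_le hb hL hm hi hid hme hsdef.symm hm1 k
    rw [integral_nat_comp hZmeas hZb (fun z => (z : ℝ) ^ 2)] at h1
    have h2 : 0 ≤ s / (m * (m - 1)) * m ^ k :=
      mul_nonneg (div_nonneg hs0 hmm1) (by positivity)
    rw [hCdef]
    linarith
  set F : Finset ℕ := (Finset.range (B + 1)).filter (fun z : ℕ => t < (z : ℝ)) with hFdef
  -- lower bound for the sum over F
  have hF_lb : t ≤ ∑ z ∈ F, P z * (z : ℝ) := by
    have hsplit := Finset.sum_filter_add_sum_filter_not (Finset.range (B + 1))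
      (fun z : ℕ => t < (z : ℝ)) (fun z : ℕ => P z * (z : ℝ))
    rw [← hFdef] at hsplit
    have hnot : ∑ z ∈ (Finset.range (B + 1)).filter (fun z : ℕ => ¬ t < (z : ℝ)),
        P z * (z : ℝ) ≤ t := by
      calc ∑ z ∈ (Finset.range (B + 1)).filter (fun z : ℕ => ¬ t < (z : ℝ)), P z * (z : ℝ)
          ≤ ∑ z ∈ (Finset.range (B + 1)).filter (fun z : ℕ => ¬ t < (z : ℝ)), P z * t := by
            refine Finset.sum_le_sum fun z hz => ?_
            exact mul_le_mul_of_nonneg_left (not_lt.1 (Finset.mem_filter.1 hz).2) (hPnn z)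
        _ = (∑ z ∈ (Finset.range (B + 1)).filter (fun z : ℕ => ¬ t < (z : ℝ)), P z) * t := by
            rw [Finset.sum_mul]
        _ ≤ 1 * t := mul_le_mul_of_nonneg_right (hsum1 _) htpos.le
        _ = t := one_mul t
    have ht2 : t + t = m ^ k := by rw [htdef]; ring
    linarith
  -- Cauchy-Schwarz
  have hCS : (∑ z ∈ F, P z * (z : ℝ)) ^ 2
      ≤ (∑ z ∈ F, P z * (z : ℝ) ^ 2) * ∑ z ∈ F, P z := by
    refine Finset.sum_sq_le_sum_mul_sum_of_sq_eq_mul F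
      (fun z _ => mul_nonneg (hPnn z) (sq_nonneg _)) (fun z _ => hPnn z) fun z _ => ?_
    ring
  have hFsub : ∑ z ∈ F, P z * (z : ℝ) ^ 2 ≤ C * m ^ (2 * k) := by
    refine le_trans ?_ hv
    exact Finset.sum_le_sum_of_subset_of_nonneg (Finset.filter_subset _ _)
      fun z _ _ => mul_nonneg (hPnn z) (sq_nonneg _)
  set A : Set Ω := {ω | t < (gw ξ 1 k ω : ℝ)} with hAdef
  have hFP : ∑ z ∈ F, P z ≤ (μ A).toReal := by
    have hdisj : ((F : Set ℕ)).PairwiseDisjoint (fun z => {ω | gw ξ 1 k ω = z}) := by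
      intro x _ y _ hxy
      simp only [Function.onFun, Set.disjoint_left]
      rintro ω hx hy
      exact hxy ((show gw ξ 1 k ω = x from hx).symm.trans hy)
    have hcup : ∑ z ∈ F, μ {ω | gw ξ 1 k ω = z} = μ (⋃ z ∈ F, {ω | gw ξ 1 k ω = z}) :=
      (measure_biUnion_finset hdisj fun z _ => hZmeas (measurableSet_singleton z)).symm
    have hsub : (⋃ z ∈ F, {ω | gw ξ 1 k ω = z}) ⊆ A := by
      intro ω hω
      simp only [Set.mem_iUnion] at hω
      obtain ⟨z, hzF, hz⟩ := hω
      have hzz : gw ξ 1 k ω = z := hz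
      have hlt : t < (z : ℝ) := (Finset.mem_filter.1 hzF).2
      show t < (gw ξ 1 k ω : ℝ)
      rw [hzz]
      exact hlt
    calc ∑ z ∈ F, P z = (∑ z ∈ F, μ {ω | gw ξ 1 k ω = z}).toReal := by
          rw [hPdef, ENNReal.toReal_sum fun z _ => measure_ne_top μ _]
      _ ≤ (μ A).toReal := by
          refine ENNReal.toReal_mono (measure_ne_top μ A) ?_
          rw [hcup]
          exact measure_mono hsub
  -- combine
  have hX : 0 ≤ (μ A).toReal := ENNReal.toReal_nonneg
  have hfinal : t ^ 2 ≤ C * m ^ (2 * k) * (μ A).toReal := by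
    calc t ^ 2 ≤ (∑ z ∈ F, P z * (z : ℝ)) ^ 2 := by
          exact pow_le_pow_left₀ htpos.le hF_lb 2
      _ ≤ (∑ z ∈ F, P z * (z : ℝ) ^ 2) * ∑ z ∈ F, P z := hCS
      _ ≤ (C * m ^ (2 * k)) * (μ A).toReal :=
          mul_le_mul hFsub hFP (Finset.sum_nonneg fun z _ => hPnn z) (by positivity)
  have hAtoReal : 1 / (4 * C) ≤ (μ A).toReal := by
    have ht2 : t ^ 2 = m ^ (2 * k) / 4 := by
      rw [htdef, pow_mul]
      ring
    rw [ht2] at hfinal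
    have hpow : (0 : ℝ) < m ^ (2 * k) := by positivity
    have h6 : 1 / (4 * C) = (m ^ (2 * k) / 4) / (C * m ^ (2 * k)) := by
      field_simp
    rw [h6, div_le_iff₀ (by positivity)]
    linarith [hfinal]
  exact ENNReal.ofReal_le_of_le_toReal hAtoReal

end Master


/-- for any `1 < μ⋆ <` mean of the offspring law, there are `δ, β > 0` with
`P(Z^n_k > δ μ⋆^k) ≥ β` for all `k ≥ 0` and all starting sizes `n ≥ 1`. -/
theorem stmt8
    {Ω : Type*} [MeasurableSpace Ω] (μ : Measure Ω) [IsProbabilityMeasure μ]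
    (pX : Measure ℕ) [IsProbabilityMeasure pX]
    (h0 : 0 < pX {0})
    (μstar : ℝ) (hμ1 : 1 < μstar)
    (hμmean : ENNReal.ofReal μstar < ∑' n : ℕ, (n : ℝ≥0∞) * pX {n})
    (ξ : ℕ × ℕ → Ω → ℕ)
    (hmeas : ∀ p, Measurable (ξ p))
    (hindep : iIndepFun ξ μ)
    (hlaw : ∀ p, Measure.map (ξ p) μ = pX) :
    ∃ δ > (0 : ℝ), ∃ β > (0 : ℝ), ∀ k n : ℕ, 1 ≤ n →
      ENNReal.ofReal β ≤ μ {ω | δ * μstar ^ k < (gw ξ n k ω : ℝ)} := by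
  classical
  -- pick a truncation level L with truncated mean > μstar
  obtain ⟨F, hF⟩ : ∃ F : Finset ℕ, ENNReal.ofReal μstar < ∑ n ∈ F, (n : ℝ≥0∞) * pX {n} := by
    rw [ENNReal.tsum_eq_iSup_sum, lt_iSup_iff] at hμmean
    exact hμmean
  set L : ℕ := F.sup id + 1 with hLdef
  have hL : 1 ≤ L := Nat.le_add_left 1 _
  have hnL : ∀ n ∈ F, n ≤ L := fun n hn =>
    le_trans (Finset.le_sup (f := id) hn) (Nat.le_succ _)
  -- the truncated offspring variables
  set ξ' : ℕ × ℕ → Ω → ℕ := fun p ω => min (ξ p ω) L with hξ'def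
  have hb : ∀ p ω, ξ' p ω ≤ L := fun p ω => min_le_right _ _
  have hm' : ∀ p, Measurable (ξ' p) :=
    fun p => (measurable_of_countable (fun n => min n L)).comp (hmeas p)
  have hi' : iIndepFun ξ' μ :=
    hindep.comp (fun _ n => min n L) (fun _ => measurable_of_countable _)
  have hid : ∀ p q, Measure.map (ξ' p) μ = Measure.map (ξ' q) μ := by
    intro p q
    have h1 : ∀ r : ℕ × ℕ, Measure.map (ξ' r) μ
        = Measure.map (fun n => min n L) pX := by
      intro r
      rw [← hlaw r, Measure.map_map (measurable_of_countable (fun n => min n L)) (hmeas r)]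
      rfl
    rw [h1 p, h1 q]
  -- the truncated mean exceeds μstar
  set m : ℝ := ∫ ω, (ξ' (0, 0) ω : ℝ) ∂μ with hmdef
  have hμm : μstar < m := by
    have hmeq : m = (∫⁻ ω, ((ξ' (0, 0) ω : ℕ) : ℝ≥0∞) ∂μ).toReal := by
      have hmeasR : Measurable fun ω => ((ξ' (0, 0) ω : ℕ) : ℝ) :=
        (measurable_of_countable (fun n : ℕ => (n : ℝ))).comp (hm' (0, 0))
      rw [hmdef, integral_eq_lintegral_of_nonneg_ae
        (Filter.Eventually.of_forall fun ω => Nat.cast_nonneg _)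
        hmeasR.aestronglyMeasurable]
      congr 1
      exact lintegral_congr fun ω => ENNReal.ofReal_natCast _
    have hlin : ∫⁻ ω, ((ξ' (0, 0) ω : ℕ) : ℝ≥0∞) ∂μ
        = ∑' n : ℕ, ((min n L : ℕ) : ℝ≥0∞) * pX {n} := by
      have : ∫⁻ ω, ((ξ' (0, 0) ω : ℕ) : ℝ≥0∞) ∂μ
          = ∫⁻ n, ((min n L : ℕ) : ℝ≥0∞) ∂(Measure.map (ξ (0, 0)) μ) := by
        rw [lintegral_map (measurable_of_countable _) (hmeas (0, 0))]
      rw [this, hlaw (0, 0), lintegral_countable' (fun n : ℕ => ((min n L : ℕ) : ℝ≥0∞))]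
    have hub : ∫⁻ ω, ((ξ' (0, 0) ω : ℕ) : ℝ≥0∞) ∂μ ≤ (L : ℝ≥0∞) := by
      calc ∫⁻ ω, ((ξ' (0, 0) ω : ℕ) : ℝ≥0∞) ∂μ
          ≤ ∫⁻ _, (L : ℝ≥0∞) ∂μ := lintegral_mono fun ω => by
            show ((ξ' (0, 0) ω : ℕ) : ℝ≥0∞) ≤ (L : ℝ≥0∞); exact_mod_cast hb (0, 0) ω
        _ = (L : ℝ≥0∞) := by simp
    have hne : ∫⁻ ω, ((ξ' (0, 0) ω : ℕ) : ℝ≥0∞) ∂μ ≠ ⊤ :=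
      ne_top_of_le_ne_top (ENNReal.natCast_ne_top L) hub
    have hlb : ENNReal.ofReal μstar < ∫⁻ ω, ((ξ' (0, 0) ω : ℕ) : ℝ≥0∞) ∂μ := by
      rw [hlin]
      refine lt_of_lt_of_le hF (le_trans (le_of_eq ?_) (ENNReal.sum_le_tsum F))
      refine Finset.sum_congr rfl fun n hn => ?_
      rw [min_eq_left (hnL n hn)]
    have := ENNReal.toReal_lt_toReal ENNReal.ofReal_ne_top hne |>.2 hlb
    rwa [ENNReal.toReal_ofReal (by linarith), ← hmeq] at this
  have hm1 : 1 < m := lt_trans hμ1 hμm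
  -- apply the master lemma to the truncated process
  obtain ⟨β, hβpos, hβ⟩ := master hb hL hm' hi' hid hmdef.symm hm1
  refine ⟨1 / 2, by norm_num, β, hβpos, fun k n hn => ?_⟩
  refine le_trans (hβ k) (measure_mono ?_)
  intro ω hω
  have hω' : m ^ k / 2 < (gw ξ' 1 k ω : ℝ) := hω
  have h1 : μstar ^ k ≤ m ^ k := pow_le_pow_left₀ (by linarith) hμm.le k
  have h2 : gw ξ' 1 k ω ≤ gw ξ n k ω :=
    le_trans (gw_mono_off (fun p ω' => min_le_left _ _) 1 k ω) (gw_mono_start ξ hn k ω)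
  have h2' : ((gw ξ' 1 k ω : ℕ) : ℝ) ≤ ((gw ξ n k ω : ℕ) : ℝ) := Nat.cast_le.2 h2
  show 1 / 2 * μstar ^ k < ((gw ξ n k ω : ℕ) : ℝ)
  calc 1 / 2 * μstar ^ k ≤ m ^ k / 2 := by linarith
    _ < _ := lt_of_lt_of_le hω' h2'
end

section
/- Let X be a supercritical offspring distribution with X(0) > 0, let (X^N_k) be the censored Galton-Watson process at level N started at N, and let A_0 = 0, A_{k+1} = inf{ℓ > A_k : X^N_ℓ = N} be the successive return times to N. Then there exists c > 0 such that for all N sufficiently large and all k, P(A_{k+1} > A_k + 1) ≤ exp(-cN). -/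
open MeasureTheory ProbabilityTheory Filter
open scoped ENNReal

/-- Successive return times to `N` of the censored process (`⊤` if no further return). -/
noncomputable def retA {Ω : Type*} (ξ : ℕ × ℕ → Ω → ℕ) (N : ℕ) : ℕ → Ω → ℕ∞
  | 0 => fun _ => 0
  | k + 1 => fun ω =>
      sInf {m : ℕ∞ | retA ξ N k ω < m ∧ ∃ ℓ : ℕ, m = (ℓ : ℕ∞) ∧ cgw ξ N ℓ ω = N}

/-- Survival time of the censored process: first hitting time of `0`. -/
noncomputable def UN {Ω : Type*} (ξ : ℕ × ℕ → Ω → ℕ) (N : ℕ) (ω : Ω) : ℕ∞ :=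
  sInf {m : ℕ∞ | ∃ k : ℕ, m = (k : ℕ∞) ∧ cgw ξ N k ω = 0}

/-- Last time the censored process is at level `N`. -/
noncomputable def VN {Ω : Type*} (ξ : ℕ × ℕ → Ω → ℕ) (N : ℕ) (ω : Ω) : ℕ∞ :=
  sSup {m : ℕ∞ | ∃ k : ℕ, m = (k : ℕ∞) ∧ cgw ξ N k ω = N}

/-- The number of finite return times: `T = sup {k : A_k < ∞}`. -/
noncomputable def TT {Ω : Type*} (ξ : ℕ × ℕ → Ω → ℕ) (N : ℕ) (ω : Ω) : ℕ∞ :=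
  sSup {m : ℕ∞ | ∃ k : ℕ, m = (k : ℕ∞) ∧ retA ξ N k ω < ⊤}

section Aux
variable {Ω : Type*} (ξ : ℕ × ℕ → Ω → ℕ) (N : ℕ)

lemma cgw_le (k : ℕ) (ω : Ω) : cgw ξ N k ω ≤ N := by
  cases k with
  | zero => exact le_rfl
  | succ k => unfold cgw; split <;> simp

open Classical in
/-- characterization of return times -/
lemma retA_eq_iff (k a : ℕ) (ω : Ω) :
    retA ξ N k ω = (a : ℕ∞) ↔
      (cgw ξ N a ω = N ∧
        ((Finset.range a).filter (fun ℓ => cgw ξ N ℓ ω = N)).card = k) := by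
  induction k generalizing a with
  | zero =>
    constructor
    · intro h
      have : a = 0 := by
        have : ((0:ℕ):ℕ∞) = (a:ℕ∞) := h
        exact (Nat.cast_inj.mp this).symm
      subst this
      simp [cgw]
    · rintro ⟨hpa, hcard⟩
      have ha : a = 0 := by
        by_contra h
        have h0 : 0 ∈ (Finset.range a).filter (fun ℓ => cgw ξ N ℓ ω = N) := by
          simp [Finset.mem_filter, Nat.pos_of_ne_zero h, cgw]
        have := Finset.card_pos.mpr ⟨0, h0⟩
        omega
      subst ha; simp [retA]
  | succ k ih =>
    set S : Set ℕ∞ := {m : ℕ∞ | retA ξ N k ω < m ∧ ∃ ℓ : ℕ, m = (ℓ : ℕ∞) ∧ cgw ξ N ℓ ω = N}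
      with hS
    have hretA : retA ξ N (k+1) ω = sInf S := rfl
    constructor
    · intro h
      rw [hretA] at h
      have hne : S.Nonempty := by
        by_contra hempty
        rw [Set.not_nonempty_iff_eq_empty] at hempty
        rw [hempty, sInf_empty] at h
        exact (ENat.top_ne_coe a) h
      have hmem : (a : ℕ∞) ∈ S := h ▸ csInf_mem hne
      obtain ⟨hlt, ℓ, hℓ, hcgw⟩ := hmem
      have hℓa : ℓ = a := Nat.cast_inj.mp hℓ.symm
      rw [hℓa] at hcgw hℓ
      rw [← hℓ] at hlt h
      -- retA k ω is finite
      have hklt : retA ξ N k ω < ⊤ := lt_of_lt_of_le hlt le_top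
      obtain ⟨b, hb⟩ : ∃ b : ℕ, retA ξ N k ω = (b : ℕ∞) := by
        cases hret : retA ξ N k ω with
        | top => rw [hret] at hklt; exact absurd hklt (lt_irrefl _)
        | coe b => exact ⟨b, rfl⟩
      obtain ⟨hpb, hcb⟩ := (ih b).mp hb
      have hba : b < a := by exact_mod_cast hb ▸ hlt
      -- no returns strictly between b and a
      have hnone : ∀ ℓ', b < ℓ' → ℓ' < a → cgw ξ N ℓ' ω ≠ N := by
        intro ℓ' h1 h2 hN'
        have hmem' : (ℓ' : ℕ∞) ∈ S := ⟨hb ▸ (by exact_mod_cast h1), ℓ', rfl, hN'⟩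
        have : (a : ℕ∞) ≤ (ℓ' : ℕ∞) := h ▸ sInf_le hmem'
        exact absurd (Nat.cast_le.mp this) (by omega)
      refine ⟨hcgw, ?_⟩
      have hfeq : (Finset.range a).filter (fun ℓ => cgw ξ N ℓ ω = N)
          = (Finset.range (b+1)).filter (fun ℓ => cgw ξ N ℓ ω = N) := by
        ext ℓ'
        simp only [Finset.mem_filter, Finset.mem_range]
        constructor
        · rintro ⟨h1, h2⟩
          refine ⟨?_, h2⟩
          by_contra hh
          exact hnone ℓ' (by omega) h1 h2
        · rintro ⟨h1, h2⟩; exact ⟨by omega, h2⟩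
      rw [hfeq, Finset.range_add_one, Finset.filter_insert, if_pos hpb,
        Finset.card_insert_of_notMem (by simp), hcb]
    · rintro ⟨hpa, hcard⟩
      -- b := max of returns below a
      have hnefil : ((Finset.range a).filter (fun ℓ => cgw ξ N ℓ ω = N)).Nonempty := by
        rw [← Finset.card_pos, hcard]; omega
      obtain ⟨b, hbmem, hbmax⟩ := Finset.exists_max_image _ id hnefil
      simp only [Finset.mem_filter, Finset.mem_range] at hbmem
      obtain ⟨hba, hpb⟩ := hbmem
      have hnone : ∀ ℓ', b < ℓ' → ℓ' < a → cgw ξ N ℓ' ω ≠ N := by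
        intro ℓ' h1 h2 hN'
        have := hbmax ℓ' (Finset.mem_filter.mpr ⟨Finset.mem_range.mpr h2, hN'⟩)
        simp only [id] at this; omega
      have hcb : ((Finset.range b).filter (fun ℓ => cgw ξ N ℓ ω = N)).card = k := by
        have hfeq : (Finset.range a).filter (fun ℓ => cgw ξ N ℓ ω = N)
            = (Finset.range (b+1)).filter (fun ℓ => cgw ξ N ℓ ω = N) := by
          ext ℓ'
          simp only [Finset.mem_filter, Finset.mem_range]
          constructor
          · rintro ⟨h1, h2⟩
            refine ⟨?_, h2⟩
            by_contra hh
            exact hnone ℓ' (by omega) h1 h2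
          · rintro ⟨h1, h2⟩; exact ⟨by omega, h2⟩
        rw [hfeq, Finset.range_add_one, Finset.filter_insert, if_pos hpb,
          Finset.card_insert_of_notMem (by simp)] at hcard
        omega
      have hb : retA ξ N k ω = (b : ℕ∞) := (ih b).mpr ⟨hpb, hcb⟩
      rw [hretA]
      refine le_antisymm (sInf_le ⟨hb ▸ (by exact_mod_cast hba), a, rfl, hpa⟩) ?_
      refine le_sInf ?_
      rintro m ⟨hlt, ℓ, rfl, hN'⟩
      rw [hb] at hlt
      have hbl : b < ℓ := by exact_mod_cast hlt
      have : a ≤ ℓ := by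
        by_contra hh
        exact hnone ℓ hbl (by omega) hN'
      exact_mod_cast this

lemma cgw_retA {k a : ℕ} {ω : Ω} (h : retA ξ N k ω = (a : ℕ∞)) : cgw ξ N a ω = N := by
  classical exact ((retA_eq_iff ξ N k a ω).mp h).1
lemma cgw_succ_eq (ξ : ℕ × ℕ → Ω → ℕ) (N : ℕ) (ℓ : ℕ) :
    cgw ξ N (ℓ+1) = fun ω =>
      if 0 < cgw ξ N ℓ ω then
        min N (∑ i ∈ Finset.range N, if i < cgw ξ N ℓ ω then ξ (ℓ, i) ω else 0)
      else 0 := by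
  funext ω
  show (if 0 < cgw ξ N ℓ ω then min N (∑ i ∈ Finset.range (cgw ξ N ℓ ω), ξ (ℓ, i) ω) else 0) = _
  congr 1
  congr 1
  rw [← Finset.sum_filter]
  apply Finset.sum_congr _ (fun _ _ => rfl)
  ext i
  simp only [Finset.mem_filter, Finset.mem_range]
  have := cgw_le ξ N ℓ ω
  omega

lemma measurable_cgw_of (ξ : ℕ × ℕ → Ω → ℕ) (N : ℕ) (m : MeasurableSpace Ω) (a : ℕ)
    (h : ∀ j i, j < a → Measurable[m] (ξ (j, i))) :
    ∀ ℓ ≤ a, Measurable[m] (cgw ξ N ℓ) := by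
  intro ℓ
  induction ℓ with
  | zero => exact fun _ => measurable_const
  | succ ℓ ih =>
    intro hℓa
    have hc : Measurable[m] (cgw ξ N ℓ) := ih (by omega)
    rw [cgw_succ_eq]
    refine Measurable.ite (hc .of_discrete) ?_ measurable_const
    refine Measurable.min measurable_const ?_
    refine Finset.measurable_sum _ (fun i _ => ?_)
    exact Measurable.ite (hc .of_discrete) (h ℓ i (by omega)) measurable_const

open Classical in
lemma measurableSet_retA_eq (ξ : ℕ × ℕ → Ω → ℕ) (N : ℕ) (m : MeasurableSpace Ω) (k a : ℕ)
    (h : ∀ j i, j < a → Measurable[m] (ξ (j, i))) :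
    MeasurableSet[m] {ω | retA ξ N k ω = (a : ℕ∞)} := by
  have hset : {ω | retA ξ N k ω = (a : ℕ∞)}
      = (cgw ξ N a) ⁻¹' {N} ∩
        (fun ω => ((Finset.range a).filter (fun ℓ => cgw ξ N ℓ ω = N)).card) ⁻¹' {k} := by
    ext ω
    simp only [Set.mem_setOf_eq, Set.mem_inter_iff, Set.mem_preimage, Set.mem_singleton_iff]
    exact retA_eq_iff ξ N k a ω
  rw [hset]
  have hcgw := measurable_cgw_of ξ N m a h
  refine MeasurableSet.inter ((hcgw a le_rfl) .of_discrete) ?_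
  have hcard : Measurable[m]
      (fun ω => ((Finset.range a).filter (fun ℓ => cgw ξ N ℓ ω = N)).card) := by
    have : (fun ω => ((Finset.range a).filter (fun ℓ => cgw ξ N ℓ ω = N)).card)
        = fun ω => ∑ ℓ ∈ Finset.range a, if cgw ξ N ℓ ω = N then 1 else 0 := by
      funext ω; rw [Finset.card_filter]
    rw [this]
    refine Finset.measurable_sum _ (fun ℓ hℓ => ?_)
    have hs : MeasurableSet[m] {ω | cgw ξ N ℓ ω = N} :=
      (hcgw ℓ (by simp at hℓ; omega)) (.of_discrete : MeasurableSet ({N} : Set ℕ))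
    exact Measurable.ite hs measurable_const measurable_const
  exact hcard .of_discrete

lemma exists_r (pX : Measure ℕ) [IsProbabilityMeasure pX]
    (hmean : 1 < ∑' n : ℕ, (n : ℝ≥0∞) * pX {n}) (h0 : 0 < pX {0}) :
    ∃ r : ℝ, 0 < r ∧ r < 1 ∧ 0 < (∑' n : ℕ, r ^ n * (pX {n}).toReal) ∧
      (∑' n : ℕ, r ^ n * (pX {n}).toReal) < r := by
  obtain ⟨p, hp⟩ : ∃ p : ℕ → ℝ, p = fun n => (pX {n}).toReal := ⟨_, rfl⟩
  have hp0 : ∀ n, 0 ≤ p n := fun n => by rw [hp]; exact ENNReal.toReal_nonneg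
  have hsumE : ∑' n : ℕ, pX {n} = 1 := by
    have huniv : (⋃ n : ℕ, ({n} : Set ℕ)) = Set.univ := by ext n; simp
    rw [← measure_iUnion (fun i j hij => by simp [Set.disjoint_singleton, hij])
      (fun i => measurableSet_singleton i), huniv, measure_univ]
  have hsummable : Summable p := by
    rw [hp]; exact ENNReal.summable_toReal (by rw [hsumE]; simp)
  have hsump : ∑' n, p n = 1 := by
    rw [hp, ← ENNReal.tsum_toReal_eq (fun n => measure_ne_top pX _), hsumE,
      ENNReal.toReal_one]
  rw [ENNReal.tsum_eq_iSup_sum, lt_iSup_iff] at hmean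
  obtain ⟨F, hF⟩ := hmean
  obtain ⟨s, hs_def⟩ : ∃ s : ℝ, s = ∑ n ∈ F, (n : ℝ) * p n := ⟨_, rfl⟩
  have hFfin : ∀ n ∈ F, (n : ℝ≥0∞) * pX {n} ≠ ⊤ :=
    fun n _ => ENNReal.mul_ne_top (by simp) (measure_ne_top pX _)
  have hs1 : 1 < s := by
    have h1 : (1 : ℝ≥0∞).toReal < (∑ n ∈ F, (n : ℝ≥0∞) * pX {n}).toReal := by
      rw [ENNReal.toReal_lt_toReal (by simp) (by
        exact (ENNReal.sum_lt_top.mpr (fun n hn => lt_top_iff_ne_top.mpr (hFfin n hn))).ne)]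
      exact hF
    rw [ENNReal.toReal_one, ENNReal.toReal_sum hFfin] at h1
    rw [hs_def]
    refine lt_of_lt_of_eq h1 (Finset.sum_congr rfl fun n _ => ?_)
    rw [ENNReal.toReal_mul, hp]
    simp
  have hs0 : 0 < s := by linarith
  obtain ⟨M, hM_def⟩ : ∃ M : ℕ, M = F.sup id + 1 := ⟨_, rfl⟩
  have hM1 : (1 : ℝ) ≤ (M : ℝ) := by exact_mod_cast Nat.one_le_iff_ne_zero.mpr (by omega)
  have hnM : ∀ n ∈ F, n ≤ M := fun n hn => by
    have := Finset.le_sup (f := id) hn; simp only [id] at this; omega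
  obtain ⟨δ, hδ_def⟩ : ∃ δ : ℝ, δ = (s - 1) / (2 * M * s) := ⟨_, rfl⟩
  have hδ0 : 0 < δ := hδ_def ▸ div_pos (by linarith) (by positivity)
  have hδhalf : δ ≤ 1 / 2 := by
    rw [hδ_def, div_le_div_iff₀ (by positivity) (by norm_num)]
    nlinarith
  obtain ⟨r, hr_def⟩ : ∃ r : ℝ, r = 1 - δ := ⟨_, rfl⟩
  have hr0 : 0 < r := by rw [hr_def]; linarith
  have hr1 : r < 1 := by rw [hr_def]; linarith
  have hrMb : 1 - (M : ℝ) * δ ≤ r ^ M := by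
    have h := one_add_mul_le_pow (a := -δ) (by linarith) M
    have h2 : (1 : ℝ) + (M : ℝ) * (-δ) = 1 - (M : ℝ) * δ := by ring
    have h3 : (1 : ℝ) + (-δ) = r := by rw [hr_def]; ring
    rw [h2, h3] at h
    exact h
  have hMδ : (M : ℝ) * δ = (s - 1) / (2 * s) := by
    rw [hδ_def]
    have hM0 : (M : ℝ) ≠ 0 := by linarith
    field_simp
  have hrMs : 1 < r ^ M * s := by
    have h1 : (s + 1) / (2 * s) ≤ r ^ M := by
      have he : (s + 1) / (2 * s) = 1 - (s - 1) / (2 * s) := by field_simp; ring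
      rw [he, ← hMδ]; exact hrMb
    have h2 : (s + 1) / (2 * s) * s ≤ r ^ M * s := mul_le_mul_of_nonneg_right h1 hs0.le
    have h3 : (s + 1) / (2 * s) * s = (s + 1) / 2 := by field_simp
    rw [h3] at h2
    linarith
  obtain ⟨g, hg_def⟩ : ∃ g : ℝ, g = ∑' n : ℕ, r ^ n * p n := ⟨_, rfl⟩
  have hterm_nonneg : ∀ n, 0 ≤ r ^ n * p n := fun n => mul_nonneg (by positivity) (hp0 n)
  have hterm_le : ∀ n, r ^ n * p n ≤ p n := fun n => by
    have : r ^ n ≤ 1 := pow_le_one₀ hr0.le hr1.le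
    nlinarith [hp0 n]
  have hgsummable : Summable (fun n => r ^ n * p n) :=
    hsummable.of_nonneg_of_le hterm_nonneg hterm_le
  have hg0 : 0 < g := by
    have hle : r ^ 0 * p 0 ≤ g := hg_def ▸ Summable.le_tsum hgsummable 0 (fun j _ => hterm_nonneg j)
    have hp00 : 0 < p 0 := by rw [hp]; exact ENNReal.toReal_pos h0.ne' (measure_ne_top pX _)
    simp only [pow_zero, one_mul] at hle
    linarith
  have hgoal : g < r := by
    have hsub : 1 - g = ∑' n : ℕ, (1 - r ^ n) * p n := by
      have h := Summable.tsum_sub hsummable hgsummable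
      rw [hsump, ← hg_def] at h
      rw [← h]
      exact tsum_congr (fun n => by ring)
    have hlow1 : ∑ n ∈ F, (1 - r ^ n) * p n ≤ ∑' n : ℕ, (1 - r ^ n) * p n := by
      refine Summable.sum_le_tsum F (fun n _ => ?_)
        ((hsummable.sub hgsummable).congr (fun n => by ring))
      have : r ^ n ≤ 1 := pow_le_one₀ hr0.le hr1.le
      nlinarith [hp0 n]
    have hlow2 : (1 - r) * (r ^ M * s) ≤ ∑ n ∈ F, (1 - r ^ n) * p n := by
      have key : ∀ n ∈ F, (1 - r) * ((n : ℝ) * r ^ M) ≤ 1 - r ^ n := by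
        intro n hn
        have hgeo : (∑ i ∈ Finset.range n, r ^ i) * (1 - r) = 1 - r ^ n := by
          have := geom_sum_mul r n
          nlinarith [this]
        have hlb : (n : ℝ) * r ^ M ≤ ∑ i ∈ Finset.range n, r ^ i := by
          have := Finset.card_nsmul_le_sum (Finset.range n) (fun i => r ^ i) (r ^ M)
            (fun i hi => pow_le_pow_of_le_one hr0.le hr1.le
              (by simp only [Finset.mem_range] at hi; have := hnM n hn; omega))
          simpa [nsmul_eq_mul, mul_comm] using this
        nlinarith [sub_nonneg.mpr hr1.le]
      calc (1 - r) * (r ^ M * s) = ∑ n ∈ F, (1 - r) * ((n : ℝ) * r ^ M) * p n := by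
            rw [hs_def, Finset.mul_sum, Finset.mul_sum]
            exact Finset.sum_congr rfl (fun n _ => by ring)
        _ ≤ ∑ n ∈ F, (1 - r ^ n) * p n :=
            Finset.sum_le_sum (fun n hn => mul_le_mul_of_nonneg_right (key n hn) (hp0 n))
    have h3 : (1 - r) * 1 < (1 - r) * (r ^ M * s) :=
      mul_lt_mul_of_pos_left hrMs (by linarith)
    linarith [hsub ▸ (hlow1.trans_lt' (by linarith) : (1:ℝ) - r < ∑' n : ℕ, (1 - r ^ n) * p n)]
  rw [hg_def, hp] at hg0 hgoal
  exact ⟨r, hr0, hr1, by simpa using hg0, by simpa using hgoal⟩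

lemma nat_lt_iff_real_le {m N : ℕ} : m < N ↔ (m : ℝ) ≤ (N : ℝ) - 1 := by
  rw [show ((N : ℝ) - 1 = ((N:ℝ) - 1)) from rfl]
  constructor
  · intro h
    have : (m : ℝ) + 1 ≤ (N : ℝ) := by exact_mod_cast Nat.succ_le_of_lt h
    linarith
  · intro h
    have : (m : ℝ) + 1 ≤ (N : ℝ) := by linarith
    exact_mod_cast this

lemma row_bound {Ω : Type*} [MeasurableSpace Ω] (μ : Measure Ω) [IsProbabilityMeasure μ]
    (pX : Measure ℕ) [IsProbabilityMeasure pX]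
    (ξ : ℕ × ℕ → Ω → ℕ) (hmeas : ∀ p, Measurable (ξ p))
    (hindep : iIndepFun ξ μ)
    (hlaw : ∀ p, Measure.map (ξ p) μ = pX)
    {r c : ℝ} (hr0 : 0 < r) (hr1 : r < 1)
    (hg0 : 0 < ∑' n : ℕ, r ^ n * (pX {n}).toReal)
    (hgr : (∑' n : ℕ, r ^ n * (pX {n}).toReal) < r)
    (hc : c = -Real.log ((∑' n : ℕ, r ^ n * (pX {n}).toReal) / r))
    (a N : ℕ) (hN : 1 ≤ N) :
    μ {ω | ∑ i ∈ Finset.range N, ξ (a, i) ω < N} ≤ ENNReal.ofReal (Real.exp (-c * N)) := by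
  obtain ⟨g, hg_def⟩ : ∃ g : ℝ, g = ∑' n : ℕ, r ^ n * (pX {n}).toReal := ⟨_, rfl⟩
  rw [← hg_def] at hg0 hgr hc
  obtain ⟨t, ht_def⟩ : ∃ t : ℝ, t = Real.log r := ⟨_, rfl⟩
  have ht0 : t ≤ 0 := ht_def ▸ Real.log_nonpos hr0.le hr1.le
  have hexpt : Real.exp t = r := ht_def ▸ Real.exp_log hr0
  -- real-valued offspring variables
  obtain ⟨X, hX_def⟩ : ∃ X : ℕ × ℕ → Ω → ℝ, X = fun p ω => (ξ p ω : ℝ) := ⟨_, rfl⟩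
  have hXmeas : ∀ p, Measurable (X p) := fun p => by
    rw [hX_def]; exact Measurable.comp .of_discrete (hmeas p)
  have hXindep : iIndepFun X μ := by
    rw [hX_def]
    exact hindep.comp (fun _ (n : ℕ) => (n : ℝ)) (fun _ => .of_discrete)
  -- mgf of a single variable equals g
  have hmgf_one : ∀ p : ℕ × ℕ, mgf (X p) μ t = g := by
    intro p
    have hint_pX : Integrable (fun n : ℕ => Real.exp (t * n)) pX := by
      refine (integrable_const (1:ℝ)).mono' (Measurable.aestronglyMeasurable .of_discrete) ?_
      refine ae_of_all _ (fun n => ?_)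
      rw [Real.norm_eq_abs, abs_of_pos (Real.exp_pos _)]
      exact Real.exp_le_one_iff.mpr (mul_nonpos_of_nonpos_of_nonneg ht0 (Nat.cast_nonneg n))
    have h1 : mgf (X p) μ t = ∫ n : ℕ, Real.exp (t * n) ∂pX := by
      rw [mgf, hX_def, ← hlaw p]
      rw [integral_map (hmeas p).aemeasurable (Measurable.aestronglyMeasurable .of_discrete)]
    rw [h1, integral_countable' hint_pX, hg_def]
    refine tsum_congr (fun n => ?_)
    rw [smul_eq_mul, mul_comm t (n : ℝ), Real.exp_nat_mul, hexpt]
    rw [measureReal_def]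
    ring
  -- the sum over the row
  obtain ⟨SR, hSR_def⟩ : ∃ SR : Ω → ℝ, SR = ∑ p ∈ ({a} ×ˢ Finset.range N), X p := ⟨_, rfl⟩
  have hSR_fun : SR = fun ω => ∑ p ∈ ({a} ×ˢ Finset.range N), X p ω := by
    rw [hSR_def]; funext ω; exact Finset.sum_apply ω _ _
  have hSR_eq : ∀ ω, SR ω = ((∑ i ∈ Finset.range N, ξ (a, i) ω : ℕ) : ℝ) := by
    intro ω
    rw [hSR_fun, hX_def]
    push_cast
    rw [Finset.sum_product, Finset.sum_singleton]
  have hSR_nonneg : ∀ ω, 0 ≤ SR ω := fun ω => by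
    rw [hSR_eq]; positivity
  have hSRmeas : Measurable SR := by
    rw [hSR_fun]
    exact Finset.measurable_sum _ (fun p _ => hXmeas p)
  have hint : Integrable (fun ω => Real.exp (t * SR ω)) μ := by
    refine (integrable_const (1:ℝ)).mono'
      ((hSRmeas.const_mul t).exp.aestronglyMeasurable) ?_
    refine ae_of_all _ (fun ω => ?_)
    rw [Real.norm_eq_abs, abs_of_pos (Real.exp_pos _)]
    exact Real.exp_le_one_iff.mpr (mul_nonpos_of_nonpos_of_nonneg ht0 (hSR_nonneg ω))
  have hmgf_sum : mgf SR μ t = g ^ N := by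
    rw [hSR_def, hXindep.mgf_sum hXmeas]
    rw [Finset.prod_congr rfl (fun p _ => hmgf_one p), Finset.prod_const,
      Finset.card_product, Finset.card_singleton, Finset.card_range, one_mul]
  -- Chernoff
  have hcher := measure_le_le_exp_mul_mgf (μ := μ) (X := SR) ((N : ℝ) - 1) ht0 hint
  rw [hmgf_sum] at hcher
  -- event identification
  have hev : {ω | ∑ i ∈ Finset.range N, ξ (a, i) ω < N} = {ω | SR ω ≤ (N : ℝ) - 1} := by
    ext ω
    simp only [Set.mem_setOf_eq, hSR_eq ω]
    exact nat_lt_iff_real_le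
  -- arithmetic: exp(-t(N-1)) g^N ≤ exp(-cN)
  obtain ⟨N', rfl⟩ : ∃ N', N = N' + 1 := ⟨N - 1, by omega⟩
  have harith : Real.exp (-t * ((N' + 1 : ℕ) - 1 : ℝ)) * g ^ (N' + 1)
      ≤ Real.exp (-c * (N' + 1 : ℕ)) := by
    have hgr0 : 0 < g / r := div_pos hg0 hr0
    have hrhs : Real.exp (-c * (N' + 1 : ℕ)) = (g / r) ^ (N' + 1) := by
      rw [hc, neg_neg, mul_comm, Real.exp_nat_mul, Real.exp_log hgr0]
    have hlhs : Real.exp (-t * ((N' + 1 : ℕ) - 1 : ℝ)) * g ^ (N' + 1)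
        = r * ((g / r) ^ (N' + 1)) := by
      have h1 : ((N' + 1 : ℕ) : ℝ) - 1 = (N' : ℕ) := by push_cast; ring
      rw [h1, mul_comm (-t), Real.exp_nat_mul, Real.exp_neg, hexpt, div_pow, inv_pow]
      rw [div_eq_mul_inv]
      field_simp
      ring
    rw [hrhs, hlhs]
    nlinarith [pow_pos hgr0 (N' + 1), pow_le_pow_left₀ hgr0.le (le_refl (g/r)) (N'+1)]
  rw [hev]
  rw [ENNReal.le_ofReal_iff_toReal_le (measure_ne_top μ _) (Real.exp_nonneg _)]
  calc (μ {ω | SR ω ≤ (N' + 1 : ℕ) - 1}).toReal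
      ≤ Real.exp (-t * ((N' + 1 : ℕ) - 1 : ℝ)) * g ^ (N' + 1) := hcher
    _ ≤ Real.exp (-c * (N' + 1 : ℕ)) := harith

end Aux

/-- with probability at least `1 - exp(-cN)`, each return to `N` is followed
immediately by another one: `P(A_{k+1} > A_k + 1) ≤ exp(-cN)`. -/
theorem stmt9
    {Ω : Type*} [MeasurableSpace Ω] (μ : Measure Ω) [IsProbabilityMeasure μ]
    (pX : Measure ℕ) [IsProbabilityMeasure pX]
    (hmean : 1 < ∑' n : ℕ, (n : ℝ≥0∞) * pX {n})
    (h0 : 0 < pX {0})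
    (ξ : ℕ × ℕ → Ω → ℕ)
    (hmeas : ∀ p, Measurable (ξ p))
    (hindep : iIndepFun ξ μ)
    (hlaw : ∀ p, Measure.map (ξ p) μ = pX) :
    ∃ c > (0 : ℝ), ∃ N₀ : ℕ, ∀ N ≥ N₀, ∀ k : ℕ,
      μ {ω | retA ξ N k ω + 1 < retA ξ N (k + 1) ω}
        ≤ ENNReal.ofReal (Real.exp (-c * N)) := by
  obtain ⟨r, hr0, hr1, hg0, hgr⟩ := exists_r pX hmean h0
  obtain ⟨c, hc⟩ : ∃ c : ℝ, c = -Real.log ((∑' n : ℕ, r ^ n * (pX {n}).toReal) / r) :=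
    ⟨_, rfl⟩
  have hcpos : 0 < c := by
    rw [hc, neg_pos]
    exact Real.log_neg (div_pos hg0 hr0) ((div_lt_one hr0).mpr hgr)
  refine ⟨c, hcpos, 1, fun N hN k => ?_⟩
  -- the events
  obtain ⟨A, hA_def⟩ : ∃ A : ℕ → Set Ω, A = fun (a : ℕ) => {ω | retA ξ N k ω = (a : ℕ∞)} :=
    ⟨_, rfl⟩
  obtain ⟨B, hB_def⟩ : ∃ B : ℕ → Set Ω,
      B = fun a => {ω | ∑ i ∈ Finset.range N, ξ (a, i) ω < N} := ⟨_, rfl⟩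
  -- inclusion into the union
  have hsub : {ω | retA ξ N k ω + 1 < retA ξ N (k + 1) ω} ⊆ ⋃ a : ℕ, A a ∩ B a := by
    intro ω hω
    simp only [Set.mem_setOf_eq] at hω
    obtain ⟨a, ha⟩ : ∃ a : ℕ, retA ξ N k ω = (a : ℕ∞) := by
      cases hret : retA ξ N k ω with
      | top => rw [hret] at hω; simp at hω
      | coe a => exact ⟨a, rfl⟩
    have hcgwa : cgw ξ N a ω = N := cgw_retA ξ N ha
    have hBa : ∑ i ∈ Finset.range N, ξ (a, i) ω < N := by
      by_contra hge
      push_neg at hge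
      have hcgw1 : cgw ξ N (a + 1) ω = N := by
        show (if 0 < cgw ξ N a ω then
          min N (∑ i ∈ Finset.range (cgw ξ N a ω), ξ (a, i) ω) else 0) = N
        rw [if_pos (by omega : 0 < cgw ξ N a ω), hcgwa]
        exact min_eq_left hge
      have hle : retA ξ N (k + 1) ω ≤ ((a + 1 : ℕ) : ℕ∞) := by
        refine sInf_le ⟨?_, a + 1, rfl, hcgw1⟩
        rw [ha]
        exact_mod_cast Nat.lt_succ_self a
      rw [ha] at hω
      have : ((a : ℕ∞) + 1) = ((a + 1 : ℕ) : ℕ∞) := by push_cast; rfl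
      rw [this] at hω
      exact absurd (lt_of_lt_of_le hω hle) (lt_irrefl _)
    exact Set.mem_iUnion.mpr ⟨a, by rw [hA_def]; exact ha, by rw [hB_def]; exact hBa⟩
  -- measurability of A a w.r.t. the past, B a w.r.t. row a
  have hAmeasS : ∀ a : ℕ, MeasurableSet[⨆ p ∈ {q : ℕ × ℕ | q.1 < a},
      MeasurableSpace.comap (ξ p) inferInstance] (A a) := by
    intro a
    rw [hA_def]
    refine measurableSet_retA_eq ξ N _ k a (fun j i hj => ?_)
    refine Measurable.mono (measurable_iff_comap_le.mpr le_rfl) ?_ le_rfl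
    exact le_iSup₂ (f := fun (p : ℕ × ℕ) (_ : p ∈ {q : ℕ × ℕ | q.1 < a}) =>
      MeasurableSpace.comap (ξ p) inferInstance) (j, i) hj
  have hBmeasT : ∀ a : ℕ, MeasurableSet[⨆ p ∈ {q : ℕ × ℕ | q.1 = a},
      MeasurableSpace.comap (ξ p) inferInstance] (B a) := by
    intro a
    rw [hB_def]
    have hsum : Measurable[⨆ p ∈ {q : ℕ × ℕ | q.1 = a},
        MeasurableSpace.comap (ξ p) inferInstance]
        (fun ω => ∑ i ∈ Finset.range N, ξ (a, i) ω) := by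
      refine Finset.measurable_sum _ (fun i _ => ?_)
      refine Measurable.mono (measurable_iff_comap_le.mpr le_rfl) ?_ le_rfl
      exact le_iSup₂ (f := fun (p : ℕ × ℕ) (_ : p ∈ {q : ℕ × ℕ | q.1 = a}) =>
        MeasurableSpace.comap (ξ p) inferInstance) (a, i) rfl
    exact hsum (.of_discrete : MeasurableSet {x : ℕ | x < N})
  have hAmeas : ∀ a : ℕ, MeasurableSet (A a) := by
    intro a
    refine (iSup₂_le fun p _ => (hmeas p).comap_le) _ (hAmeasS a)
  -- independence
  have hprod : ∀ a : ℕ, μ (A a ∩ B a) = μ (A a) * μ (B a) := by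
    intro a
    have hdisj : Disjoint {q : ℕ × ℕ | q.1 < a} {q : ℕ × ℕ | q.1 = a} := by
      rw [Set.disjoint_left]
      intro q hq hq'
      simp only [Set.mem_setOf_eq] at hq hq'
      omega
    have hInd := indep_iSup_of_disjoint (fun p => (hmeas p).comap_le) hindep hdisj
    exact (Indep_iff _ _ _).mp hInd _ _ (hAmeasS a) (hBmeasT a)
  -- row bound
  have hrow : ∀ a : ℕ, μ (B a) ≤ ENNReal.ofReal (Real.exp (-c * N)) := by
    intro a
    rw [hB_def]
    exact row_bound μ pX ξ hmeas hindep hlaw hr0 hr1 hg0 hgr hc a N hN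
  -- sum of A's is at most 1
  have hAsum : ∑' a : ℕ, μ (A a) ≤ 1 := by
    rw [← measure_iUnion ?_ hAmeas]
    · exact prob_le_one
    · intro a b hab
      rw [Function.onFun, hA_def, Set.disjoint_left]
      intro ω h1 h2
      simp only [Set.mem_setOf_eq] at h1 h2
      exact hab (Nat.cast_inj.mp (h1.symm.trans h2))
  calc μ {ω | retA ξ N k ω + 1 < retA ξ N (k + 1) ω}
      ≤ μ (⋃ a : ℕ, A a ∩ B a) := measure_mono hsub
    _ ≤ ∑' a : ℕ, μ (A a ∩ B a) := measure_iUnion_le _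
    _ = ∑' a : ℕ, μ (A a) * μ (B a) := tsum_congr hprod
    _ ≤ ∑' a : ℕ, μ (A a) * ENNReal.ofReal (Real.exp (-c * N)) :=
        ENNReal.tsum_le_tsum (fun a => mul_le_mul_right (hrow a) _)
    _ = (∑' a : ℕ, μ (A a)) * ENNReal.ofReal (Real.exp (-c * N)) :=
        ENNReal.tsum_mul_right
    _ ≤ 1 * ENNReal.ofReal (Real.exp (-c * N)) := mul_le_mul_left hAsum _
    _ = ENNReal.ofReal (Real.exp (-c * N)) := one_mul _
end

section
/- In the branching-selection particle system with N particles and branching law (X, X'), the process (Y^N_k(k))_{k ≥ 0} counting the number of particles at the rightmost possible position k at time k has the same law as the Galton-Watson process with offspring X censored at level N and started at N. -/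
open MeasureTheory ProbabilityTheory Filter
open scoped ENNReal

/-- Selection step: from the configuration `t` (particle counts per position, supported on
positions `≤ cap`), keep only the `N` rightmost particles. -/
def bsSelect (N : ℕ) (t : ℕ → ℕ) (cap : ℕ) : ℕ → ℕ :=
  fun ℓ => min (t ℓ) (N - ∑ j ∈ Finset.Ioc ℓ cap, t j)

/-- The branching-selection particle system with `N` particles: `bs ζ N k ω ℓ` is the number
of particles at position `ℓ` at time `k`. Each particle at position `ℓ` is replaced by `X`
particles at `ℓ + 1` and `X'` particles at `ℓ`, where `(X, X') = ζ (ℓ, k, i)`, and then only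
the `N` rightmost particles are kept. -/
noncomputable def bs {Ω : Type*} (ζ : ℕ × ℕ × ℕ → Ω → ℕ × ℕ) (N : ℕ) : ℕ → Ω → ℕ → ℕ
  | 0 => fun _ ℓ => if ℓ = 0 then N else 0
  | k + 1 => fun ω =>
      bsSelect N
        (fun ℓ =>
          (if ℓ = 0 then 0
            else ∑ i ∈ Finset.range (bs ζ N k ω (ℓ - 1)), (ζ (ℓ - 1, k, i) ω).1)
          + ∑ i ∈ Finset.range (bs ζ N k ω ℓ), (ζ (ℓ, k, i) ω).2)
        (k + 1)

/-! ### Auxiliary material -/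

/-- Deterministic version of the censored Galton-Watson recursion. -/
noncomputable def cgwD (g : ℕ × ℕ → ℕ) (N : ℕ) : ℕ → ℕ
  | 0 => N
  | k + 1 => if 0 < cgwD g N k then min N (∑ i ∈ Finset.range (cgwD g N k), g (k, i)) else 0

lemma cgw_eq_cgwD {Ω : Type*} (ξ : ℕ × ℕ → Ω → ℕ) (N k : ℕ) (ω : Ω) :
    cgw ξ N k ω = cgwD (fun p => ξ p ω) N k := by
  induction k with
  | zero => rfl
  | succ k ih => simp only [cgw, cgwD, ih]

lemma meas_comp_nat {α : Type*} [MeasurableSpace α] {S : ℕ → α → ℕ}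
    (hS : ∀ m, Measurable (S m)) {h : α → ℕ} (hh : Measurable h) :
    Measurable fun a => S (h a) a := by
  apply measurable_to_countable'
  intro n
  have heq : (fun a => S (h a) a) ⁻¹' {n} = ⋃ m, h ⁻¹' {m} ∩ S m ⁻¹' {n} := by
    ext a
    simp only [Set.mem_preimage, Set.mem_singleton_iff, Set.mem_iUnion, Set.mem_inter_iff]
    constructor
    · intro hn; exact ⟨h a, rfl, hn⟩
    · rintro ⟨m, hm, hn⟩; rw [hm]; exact hn
  rw [heq]
  exact MeasurableSet.iUnion fun m =>
    ((hh (measurableSet_singleton m)).inter (hS m (measurableSet_singleton n)))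

lemma measurable_cgwD (N k : ℕ) : Measurable fun g : ℕ × ℕ → ℕ => cgwD g N k := by
  induction k with
  | zero => exact measurable_const
  | succ k ih =>
      have : (fun g : ℕ × ℕ → ℕ => cgwD g N (k + 1))
          = fun g => (fun m (g : ℕ × ℕ → ℕ) =>
              if 0 < m then min N (∑ i ∈ Finset.range m, g (k, i)) else 0) (cgwD g N k) g := rfl
      rw [this]
      refine meas_comp_nat (S := fun m (g : ℕ × ℕ → ℕ) =>
          if 0 < m then min N (∑ i ∈ Finset.range m, g (k, i)) else 0) (fun m => ?_) ih
      by_cases hm : 0 < m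
      · simp only [if_pos hm]
        exact measurable_const.min (Finset.measurable_sum _ fun i _ => measurable_pi_apply _)
      · simp only [if_neg hm]; exact measurable_const

lemma bs_eq_zero {Ω : Type*} (ζ : ℕ × ℕ × ℕ → Ω → ℕ × ℕ) (N : ℕ) (k : ℕ) (ω : Ω)
    {ℓ : ℕ} (h : k < ℓ) : bs ζ N k ω ℓ = 0 := by
  induction k generalizing ℓ with
  | zero =>
      have : ℓ ≠ 0 := by omega
      simp [bs, this]
  | succ k ih =>
      have h1 : bs ζ N k ω (ℓ - 1) = 0 := ih (by omega)
      have h2 : bs ζ N k ω ℓ = 0 := ih (by omega)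
      have hℓ : ℓ ≠ 0 := by omega
      simp [bs, bsSelect, hℓ, h1, h2]

lemma bs_diag {Ω : Type*} (ζ : ℕ × ℕ × ℕ → Ω → ℕ × ℕ) (N k : ℕ) (ω : Ω) :
    bs ζ N k ω k = cgwD (fun p => (ζ (p.1, p.1, p.2) ω).1) N k := by
  induction k with
  | zero => rfl
  | succ k ih =>
      have h2 : bs ζ N k ω (k + 1) = 0 := bs_eq_zero ζ N k ω (Nat.lt_succ_self k)
      have hstep : bs ζ N (k + 1) ω (k + 1)
          = min (∑ i ∈ Finset.range (cgwD (fun p => (ζ (p.1, p.1, p.2) ω).1) N k),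
              (ζ (k, k, i) ω).1) N := by
        simp [bs, bsSelect, h2, ih, Nat.succ_ne_zero]
      rw [hstep]
      by_cases h : 0 < cgwD (fun p => (ζ (p.1, p.1, p.2) ω).1) N k
      · rw [cgwD, if_pos h, min_comm]
      · rw [cgwD, if_neg h]
        have h0 : cgwD (fun p => (ζ (p.1, p.1, p.2) ω).1) N k = 0 := by omega
        simp [h0]

/-- Extension of a function on a finite set of indices by `0`. -/
noncomputable def extFn (s : Finset (ℕ × ℕ)) (v : (p : s) → ℕ) : ℕ × ℕ → ℕ :=
  fun q => if h : q ∈ s then v ⟨q, h⟩ else 0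

lemma cyl_meas {Ω : Type*} [MeasurableSpace Ω] (μ : Measure Ω) (f : ℕ × ℕ → Ω → ℕ)
    (hfm : ∀ p, Measurable (f p))
    (hf : ∀ (S : Finset (ℕ × ℕ)) (t : ℕ × ℕ → Set ℕ),
      μ (⋂ p ∈ S, f p ⁻¹' t p) = ∏ p ∈ S, μ (f p ⁻¹' t p))
    (s : Finset (ℕ × ℕ)) (B : Set ((p : s) → ℕ)) :
    μ ((fun ω (p : ℕ × ℕ) => f p ω) ⁻¹' cylinder s B)
      = ∑' v : B, ∏ p ∈ s, Measure.map (f p) μ {extFn s v p} := by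
  have hmem : ∀ (ω : Ω) (v : (p : s) → ℕ),
      (∀ p ∈ s, f p ω = extFn s v p) ↔ s.restrict (fun p => f p ω) = v := by
    intro ω v
    constructor
    · intro h
      funext ⟨p, hp⟩
      have := h p hp
      rwa [extFn, dif_pos hp] at this
    · rintro rfl p hp
      rw [extFn, dif_pos hp]
      rfl
  have hpre : (fun ω (p : ℕ × ℕ) => f p ω) ⁻¹' cylinder s B
      = ⋃ v ∈ B, ⋂ p ∈ s, f p ⁻¹' {extFn s v p} := by
    ext ω
    simp only [Set.mem_preimage, mem_cylinder, Set.mem_iUnion, Set.mem_iInter,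
      Set.mem_singleton_iff]
    constructor
    · intro h
      exact ⟨s.restrict (fun p => f p ω), h, fun p hp => ((hmem ω _).mpr rfl) p hp⟩
    · rintro ⟨v, hv, h⟩
      rwa [(hmem ω v).mp h]
  rw [hpre, measure_biUnion B.to_countable ?_ ?_]
  · refine tsum_congr fun v => ?_
    rw [hf s (fun p => {extFn s v p})]
    refine Finset.prod_congr rfl fun p _ => ?_
    rw [Measure.map_apply (hfm p) (measurableSet_singleton _)]
  · intro v hv v' hv' hne
    refine Set.disjoint_left.mpr fun ω hω hω' => hne ?_
    simp only [Set.mem_iInter, Set.mem_preimage, Set.mem_singleton_iff] at hω hω'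
    rw [← (hmem ω v).mp hω, ← (hmem ω v').mp hω']
  · intro v hv
    exact MeasurableSet.biInter s.countable_toSet
      fun p _ => (hfm p) (measurableSet_singleton _)

lemma map_pi_eq {Ω : Type*} [MeasurableSpace Ω] (μ : Measure Ω) [IsProbabilityMeasure μ]
    (f g : ℕ × ℕ → Ω → ℕ)
    (hfm : ∀ p, Measurable (f p)) (hgm : ∀ p, Measurable (g p))
    (hf : ∀ (S : Finset (ℕ × ℕ)) (t : ℕ × ℕ → Set ℕ),
      μ (⋂ p ∈ S, f p ⁻¹' t p) = ∏ p ∈ S, μ (f p ⁻¹' t p))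
    (hg : ∀ (S : Finset (ℕ × ℕ)) (t : ℕ × ℕ → Set ℕ),
      μ (⋂ p ∈ S, g p ⁻¹' t p) = ∏ p ∈ S, μ (g p ⁻¹' t p))
    (hl : ∀ p, Measure.map (f p) μ = Measure.map (g p) μ) :
    Measure.map (fun ω (p : ℕ × ℕ) => f p ω) μ
      = Measure.map (fun ω (p : ℕ × ℕ) => g p ω) μ := by
  have hFm : Measurable (fun ω (p : ℕ × ℕ) => f p ω) := measurable_pi_lambda _ hfm
  have hGm : Measurable (fun ω (p : ℕ × ℕ) => g p ω) := measurable_pi_lambda _ hgm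
  have hPF : IsProbabilityMeasure (Measure.map (fun ω (p : ℕ × ℕ) => f p ω) μ) :=
    Measure.isProbabilityMeasure_map hFm.aemeasurable
  have hPG : IsProbabilityMeasure (Measure.map (fun ω (p : ℕ × ℕ) => g p ω) μ) :=
    Measure.isProbabilityMeasure_map hGm.aemeasurable
  refine ext_of_generate_finite (measurableCylinders (fun _ : ℕ × ℕ => ℕ))
    generateFrom_measurableCylinders.symm isPiSystem_measurableCylinders ?_ ?_
  · intro t ht
    obtain ⟨s, B, hB, rfl⟩ := (mem_measurableCylinders t).mp ht
    rw [Measure.map_apply hFm (MeasurableSet.of_mem_measurableCylinders ht),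
      Measure.map_apply hGm (MeasurableSet.of_mem_measurableCylinders ht),
      cyl_meas μ f hfm hf s B, cyl_meas μ g hgm hg s B]
    exact tsum_congr fun v => Finset.prod_congr rfl fun p _ => by rw [hl p]
  · simp [hPF.measure_univ, hPG.measure_univ]

/-- in the branching-selection system, the process counting the number of
particles at the rightmost possible position `k` at time `k` has the same law as the
Galton-Watson process with offspring `X` (the first marginal) censored at level `N`. -/
theorem stmt18
    {Ω : Type*} [MeasurableSpace Ω] (μ : Measure Ω) [IsProbabilityMeasure μ]
    (p2 : Measure (ℕ × ℕ)) [IsProbabilityMeasure p2]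
    (hmean : 1 < ∑' n : ℕ, (n : ℝ≥0∞) * (Measure.map Prod.fst p2) {n})
    (hsum : p2 {p : ℕ × ℕ | p.1 + p.2 = 0} = 0)
    (ζ : ℕ × ℕ × ℕ → Ω → ℕ × ℕ)
    (hζmeas : ∀ p, Measurable (ζ p))
    (hζindep : iIndepFun ζ μ)
    (hζlaw : ∀ p, Measure.map (ζ p) μ = p2)
    (ξ : ℕ × ℕ → Ω → ℕ)
    (hmeas : ∀ p, Measurable (ξ p))
    (hindep : iIndepFun ξ μ)
    (hlaw : ∀ p, Measure.map (ξ p) μ = Measure.map Prod.fst p2)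
    (N : ℕ) :
    Measure.map (fun ω => fun k : ℕ => bs ζ N k ω k) μ
      = Measure.map (fun ω => fun k : ℕ => cgw ξ N k ω) μ := by
  -- the first marginals of `ζ` along the diagonal indices
  have hξ'm : ∀ p : ℕ × ℕ, Measurable (fun ω => (ζ (p.1, p.1, p.2) ω).1) :=
    fun p => measurable_fst.comp (hζmeas _)
  have e_inj : Function.Injective (fun p : ℕ × ℕ => (p.1, p.1, p.2)) := by
    intro a b h
    simp only [Prod.mk.injEq] at h
    exact Prod.ext h.1 h.2.2
  have hf : ∀ (S : Finset (ℕ × ℕ)) (t : ℕ × ℕ → Set ℕ),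
      μ (⋂ p ∈ S, ξ p ⁻¹' t p) = ∏ p ∈ S, μ (ξ p ⁻¹' t p) :=
    fun S t => hindep.measure_inter_preimage_eq_mul S (fun _ _ => trivial)
  have hg : ∀ (S : Finset (ℕ × ℕ)) (t : ℕ × ℕ → Set ℕ),
      μ (⋂ p ∈ S, (fun ω => (ζ (p.1, p.1, p.2) ω).1) ⁻¹' t p)
        = ∏ p ∈ S, μ ((fun ω => (ζ (p.1, p.1, p.2) ω).1) ⁻¹' t p) := by
    intro S t
    have key := hζindep.measure_inter_preimage_eq_mul
      (S.image (fun p : ℕ × ℕ => (p.1, p.1, p.2)))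
      (sets := fun q => Prod.fst ⁻¹' t (q.1, q.2.2)) (fun _ _ => measurable_fst trivial)
    rw [Finset.prod_image (fun a _ b _ h => e_inj h)] at key
    have hinter : (⋂ q ∈ S.image (fun p : ℕ × ℕ => (p.1, p.1, p.2)),
          ζ q ⁻¹' (Prod.fst ⁻¹' t (q.1, q.2.2)))
        = ⋂ p ∈ S, (fun ω => (ζ (p.1, p.1, p.2) ω).1) ⁻¹' t p := by
      ext ω
      simp only [Set.mem_iInter, Finset.mem_image, Set.mem_preimage]
      constructor
      · intro h p hp
        exact h (p.1, p.1, p.2) ⟨p, hp, rfl⟩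
      · rintro h q ⟨p, hp, rfl⟩
        exact h p hp
    rw [hinter] at key
    exact key
  have hl : ∀ p : ℕ × ℕ, Measure.map (fun ω => (ζ (p.1, p.1, p.2) ω).1) μ
      = Measure.map (ξ p) μ := by
    intro p
    rw [hlaw p, ← hζlaw (p.1, p.1, p.2)]
    exact (Measure.map_map measurable_fst (hζmeas _)).symm
  have hptL : (fun ω => fun k : ℕ => bs ζ N k ω k)
      = (fun g : ℕ × ℕ → ℕ => fun k => cgwD g N k)
        ∘ (fun ω (p : ℕ × ℕ) => (ζ (p.1, p.1, p.2) ω).1) :=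
    funext fun ω => funext fun k => bs_diag ζ N k ω
  have hptR : (fun ω => fun k : ℕ => cgw ξ N k ω)
      = (fun g : ℕ × ℕ → ℕ => fun k => cgwD g N k) ∘ (fun ω (p : ℕ × ℕ) => ξ p ω) :=
    funext fun ω => funext fun k => cgw_eq_cgwD ξ N k ω
  have hΦ : Measurable fun g : ℕ × ℕ → ℕ => fun k => cgwD g N k :=
    measurable_pi_lambda _ (fun k => measurable_cgwD N k)
  rw [hptL, hptR, ← Measure.map_map hΦ (measurable_pi_lambda _ hξ'm),
    ← Measure.map_map hΦ (measurable_pi_lambda _ hmeas),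
    map_pi_eq μ _ ξ hξ'm hmeas hg hf hl]
end
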